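/- arXiv:0712.0331 — 3 statements merged into one kernel-verified Lean document; each statement's English description precedes it below -/
import Mathlib

section
/- Let r ≥ 1 and let n_1, ..., n_r be integers with 1 < n_1 | n_2 | ... | n_r, let G = C_{n_1} ⊕ ... ⊕ C_{n_r} and n = n_r. Then there exists a family (x_d)_{d | n} of natural numbers indexed by the positive divisors of n such that: for every divisor d of n and every divisor d' of d with d' > 1, x_d ≤ η(G_{υ(d',d)}) − 1; for every divisor d of n, Σ_{d' | d} x_{d'} ≤ D(G_{υ(d,d)}) − 1; and k(G) ≤ Σ_{d | n} x_d/d. In particular, k(G) is at most the maximum of Σ_{d | n} x_d/d over all families of natural numbers satisfying these constraints. -/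
open scoped BigOperators

attribute [local instance] Classical.propDecidable

/-- A sequence (multiset) over `G` is zero-sumfree if no nonempty sub-multiset sums to `0`. -/
def IsZeroSumFree {G : Type*} [AddCommGroup G] (S : Multiset G) : Prop :=
  ∀ T : Multiset G, T ≤ S → T ≠ 0 → T.sum ≠ 0

/-- A minimal zero-sum sequence: sum `0`, and no nonempty proper sub-multiset sums to `0`. -/
def IsMinimalZeroSum {G : Type*} [AddCommGroup G] (S : Multiset G) : Prop :=
  S.sum = 0 ∧ ∀ T : Multiset G, T < S → T ≠ 0 → T.sum ≠ 0

/-- The cross number of a sequence: `k(S) = Σ_{g ∈ S} 1/ord(g)`. -/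
noncomputable def crossNumber {G : Type*} [AddCommGroup G] (S : Multiset G) : ℝ :=
  (S.map fun g => (1 : ℝ) / (addOrderOf g)).sum

/-- The little cross number `k(G)`: max of `k(S)` over zero-sumfree sequences `S` over `G`. -/
noncomputable def littleCrossNumber (G : Type*) [AddCommGroup G] : ℝ :=
  sSup {x : ℝ | ∃ S : Multiset G, IsZeroSumFree S ∧ crossNumber S = x}

/-- The cross number `K(G)`: max of `k(S)` over minimal zero-sum sequences `S` over `G`. -/
noncomputable def bigCrossNumber (G : Type*) [AddCommGroup G] : ℝ :=
  sSup {x : ℝ | ∃ S : Multiset G, IsMinimalZeroSum S ∧ crossNumber S = x}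

/-- The Davenport constant `D(G)`. -/
noncomputable def davenport (G : Type*) [AddCommGroup G] : ℕ :=
  sInf {t | 1 ≤ t ∧ ∀ S : Multiset G, t ≤ Multiset.card S →
    ∃ T, T ≤ S ∧ T ≠ 0 ∧ T.sum = 0}

/-- The constant `η(G)`. -/
noncomputable def etaConst (G : Type*) [AddCommGroup G] : ℕ :=
  sInf {t | 1 ≤ t ∧ ∀ S : Multiset G, t ≤ Multiset.card S →
    ∃ T, T ≤ S ∧ T ≠ 0 ∧ Multiset.card T ≤ AddMonoid.exponent G ∧ T.sum = 0}

/-- `υ_i(d',d) = A_i / gcd(A_i, B_i)` where `A_i = gcd(d', n_i)` and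
`B_i = lcm(d, n_i)/lcm(d', n_i)`. -/
def upsilon (ni d' d : ℕ) : ℕ :=
  Nat.gcd d' ni / Nat.gcd (Nat.gcd d' ni) (Nat.lcm d ni / Nat.lcm d' ni)

/-- `k*` of `C_{n_1} ⊕ ... ⊕ C_{n_r}`, computed from the primary decomposition. -/
noncomputable def kStarTuple {r : ℕ} (n : Fin r → ℕ) : ℝ :=
  ∑ i, ∑ p ∈ (n i).primeFactors,
    ((p ^ ((n i).factorization p) : ℝ) - 1) / (p ^ ((n i).factorization p))

/-- `α(n) = Σ_{d | n} (P⁻(d) − 1)/d`. -/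
noncomputable def alphaFn (n : ℕ) : ℝ :=
  ∑ d ∈ n.divisors, ((d.minFac : ℝ) - 1) / d

/-- `β(n) = Σ_{p | n prime} (p − 1)/p`. -/
noncomputable def betaFn (n : ℕ) : ℝ :=
  ∑ p ∈ n.primeFactors, ((p : ℝ) - 1) / p

/-! ### Auxiliary lemmas -/

section aux
variable {G : Type*} [AddCommGroup G]

lemma zsf_zero : IsZeroSumFree (0 : Multiset G) := by
  intro T hT h0; rw [Multiset.le_zero.mp hT] at h0; exact (h0 rfl).elim

lemma crossNumber_add (S T : Multiset G) :
    crossNumber (S + T) = crossNumber S + crossNumber T := by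
  simp [crossNumber]

lemma crossNumber_cons (a : G) (S : Multiset G) :
    crossNumber (a ::ₘ S) = 1 / (addOrderOf a) + crossNumber S := by
  simp [crossNumber]

/-- pigeonhole: long sequences contain a short zero-sum. -/
lemma exists_short_zero_sum [Fintype G] {m : ℕ} (hm : 0 < m)
    (hord : ∀ g : G, addOrderOf g ∣ m) (S : Multiset G)
    (hcard : Fintype.card G * (m - 1) + 1 ≤ Multiset.card S) :
    ∃ T, T ≤ S ∧ T ≠ 0 ∧ Multiset.card T ≤ m ∧ T.sum = 0 := by
  classical
  have hex : ∃ g : G, m ≤ S.count g := by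
    by_contra hc
    push_neg at hc
    have h1 : Multiset.card S = ∑ a ∈ S.toFinset, S.count a :=
      (Multiset.toFinset_sum_count_eq S).symm
    have h2 : ∑ a ∈ S.toFinset, S.count a ≤ ∑ a ∈ S.toFinset, (m - 1) :=
      Finset.sum_le_sum fun a _ => by have := hc a; omega
    have h3 : S.toFinset.card ≤ Fintype.card G := Finset.card_le_univ _
    have : Multiset.card S ≤ Fintype.card G * (m - 1) := by
      calc Multiset.card S ≤ S.toFinset.card * (m-1) := by
            rw [h1]; simpa [Finset.sum_const, mul_comm] using h2
        _ ≤ Fintype.card G * (m-1) := Nat.mul_le_mul_right _ h3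
    omega
  obtain ⟨g, hg⟩ := hex
  have hop : 0 < addOrderOf g := addOrderOf_pos g
  refine ⟨Multiset.replicate (addOrderOf g) g, ?_, ?_, ?_, ?_⟩
  · exact (Multiset.le_count_iff_replicate_le).mp
      (le_trans (Nat.le_of_dvd hm (hord g)) hg)
  · intro h
    have := congrArg Multiset.card h
    simp only [Multiset.card_replicate, Multiset.card_zero] at this; omega
  · simpa using Nat.le_of_dvd hm (hord g)
  · simp [Multiset.sum_replicate, addOrderOf_nsmul_eq_zero]

end aux

section spec
variable (G : Type*) [AddCommGroup G] [Fintype G]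

lemma exponent_pos' : 0 < AddMonoid.exponent G :=
  AddMonoid.exponent_pos.mpr AddMonoid.ExponentExists.of_finite

lemma eta_spec : 1 ≤ etaConst G ∧ ∀ S : Multiset G, etaConst G ≤ Multiset.card S →
    ∃ T, T ≤ S ∧ T ≠ 0 ∧ Multiset.card T ≤ AddMonoid.exponent G ∧ T.sum = 0 := by
  have hmem : Fintype.card G * (AddMonoid.exponent G - 1) + 1 ∈
      {t | 1 ≤ t ∧ ∀ S : Multiset G, t ≤ Multiset.card S →
        ∃ T, T ≤ S ∧ T ≠ 0 ∧ Multiset.card T ≤ AddMonoid.exponent G ∧ T.sum = 0} := by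
    refine ⟨by omega, fun S hS => ?_⟩
    exact exists_short_zero_sum (exponent_pos' G)
      (fun g => AddMonoid.addOrder_dvd_exponent g) S hS
  exact Nat.sInf_mem ⟨_, hmem⟩

lemma davenport_spec : 1 ≤ davenport G ∧ ∀ S : Multiset G, davenport G ≤ Multiset.card S →
    ∃ T, T ≤ S ∧ T ≠ 0 ∧ T.sum = 0 := by
  have hmem : Fintype.card G * (AddMonoid.exponent G - 1) + 1 ∈
      {t | 1 ≤ t ∧ ∀ S : Multiset G, t ≤ Multiset.card S →
        ∃ T, T ≤ S ∧ T ≠ 0 ∧ T.sum = 0} := by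
    refine ⟨by omega, fun S hS => ?_⟩
    obtain ⟨T, h1, h2, _, h4⟩ := exists_short_zero_sum (exponent_pos' G)
      (fun g => AddMonoid.addOrder_dvd_exponent g) S hS
    exact ⟨T, h1, h2, h4⟩
  exact Nat.sInf_mem ⟨_, hmem⟩

lemma zsf_card_le {S : Multiset G} (h : IsZeroSumFree S) :
    Multiset.card S ≤ Fintype.card G * (AddMonoid.exponent G - 1) := by
  by_contra hc
  push_neg at hc
  obtain ⟨T, h1, h2, _, h4⟩ := exists_short_zero_sum (exponent_pos' G)
    (fun g => AddMonoid.addOrder_dvd_exponent g) S (by omega)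
  exact h T h1 h2 h4

end spec

lemma pullback_le_map {α β : Type*} [DecidableEq α] [DecidableEq β] {f : α → β} :
    ∀ (T : Multiset β) (S : Multiset α), T ≤ S.map f → ∃ T' ≤ S, T'.map f = T := by
  intro T
  induction T using Multiset.induction with
  | empty => exact fun S _ => ⟨0, zero_le, rfl⟩
  | cons b T ih =>
    intro S h
    have hb : b ∈ S.map f := Multiset.mem_of_le h (Multiset.mem_cons_self b T)
    obtain ⟨a, haS, hab⟩ := Multiset.mem_map.mp hb
    have hS : S = a ::ₘ S.erase a := (Multiset.cons_erase haS).symm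
    have hmap : S.map f = b ::ₘ (S.erase a).map f := by
      rw [hS]; simp [hab]
    have hT : T ≤ (S.erase a).map f := by
      have := Multiset.erase_le_erase b h
      rwa [Multiset.erase_cons_head, hmap, Multiset.erase_cons_head] at this
    obtain ⟨T', hT', hTm⟩ := ih (S.erase a) hT
    refine ⟨a ::ₘ T', ?_, by simp [hab, hTm]⟩
    rw [hS]
    exact Multiset.cons_le_cons a hT'

/-! ### Arithmetic of `upsilon` -/

lemma upsilon_pos {n d' d : ℕ} (hd' : 0 < d') : 0 < upsilon n d' d := by
  have hA : 0 < Nat.gcd d' n := Nat.gcd_pos_of_pos_left _ hd'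
  exact Nat.div_pos (Nat.le_of_dvd hA (Nat.gcd_dvd_left _ _)) (Nat.gcd_pos_of_pos_left _ hA)

lemma upsilon_dvd_left {n d' d : ℕ} : upsilon n d' d ∣ Nat.gcd d' n :=
  Nat.div_dvd_of_dvd (Nat.gcd_dvd_left _ _)

lemma upsilon_dvd_d' {n d' d : ℕ} : upsilon n d' d ∣ d' :=
  upsilon_dvd_left.trans (Nat.gcd_dvd_left _ _)

lemma upsilon_dvd_n {n d' d : ℕ} : upsilon n d' d ∣ n :=
  upsilon_dvd_left.trans (Nat.gcd_dvd_right _ _)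

lemma upsilon_self {n d : ℕ} (hn : 0 < n) (hd : 0 < d) : upsilon n d d = Nat.gcd d n := by
  unfold upsilon
  rw [Nat.div_self (Nat.lcm_pos hd hn)]
  simp

lemma upsilon_eq {n d' d : ℕ} (hn : 0 < n) (hd' : 0 < d') (hd : 0 < d) (hdd : d' ∣ d) :
    upsilon n d' d = Nat.gcd d n / Nat.gcd (Nat.gcd d n) (d / d') := by
  have hA : 0 < Nat.gcd d' n := Nat.gcd_pos_of_pos_left _ hd'
  have hA' : 0 < Nat.gcd d n := Nat.gcd_pos_of_pos_left _ hd
  have hll : Nat.lcm d' n ∣ Nat.lcm d n :=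
    Nat.lcm_dvd (hdd.trans (Nat.dvd_lcm_left _ _)) (Nat.dvd_lcm_right _ _)
  have hlpos : 0 < Nat.lcm d' n := Nat.lcm_pos hd' hn
  have hlpos2 : 0 < Nat.lcm d n := Nat.lcm_pos hd hn
  have hBpos : 0 < Nat.lcm d n / Nat.lcm d' n := Nat.div_pos (Nat.le_of_dvd hlpos2 hll) hlpos
  have hedvd : d / d' ∣ d := Nat.div_dvd_of_dvd hdd
  have hepos : 0 < d / d' := Nat.div_pos (Nat.le_of_dvd hd hdd) hd'
  have hgl : Nat.gcd (Nat.gcd d' n) (Nat.lcm d n / Nat.lcm d' n) ∣ Nat.gcd d' n :=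
    Nat.gcd_dvd_left _ _
  have hgr : Nat.gcd (Nat.gcd d n) (d / d') ∣ Nat.gcd d n := Nat.gcd_dvd_left _ _
  have hX : 0 < upsilon n d' d := upsilon_pos hd'
  have hY : 0 < Nat.gcd d n / Nat.gcd (Nat.gcd d n) (d / d') :=
    Nat.div_pos (Nat.le_of_dvd hA' hgr) (Nat.gcd_pos_of_pos_left _ hA')
  have hfact : (upsilon n d' d).factorization =
      (Nat.gcd d n / Nat.gcd (Nat.gcd d n) (d / d')).factorization := by
    unfold upsilon
    rw [Nat.factorization_div hgl, Nat.factorization_div hgr,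
      Nat.factorization_gcd hA.ne' hBpos.ne', Nat.factorization_gcd hA'.ne' hepos.ne',
      Nat.factorization_gcd hd'.ne' hn.ne', Nat.factorization_gcd hd.ne' hn.ne',
      Nat.factorization_div hll, Nat.factorization_div hdd,
      Nat.factorization_lcm hd.ne' hn.ne', Nat.factorization_lcm hd'.ne' hn.ne']
    ext p
    simp only [Finsupp.tsub_apply, Finsupp.inf_apply, Finsupp.sup_apply]
    have hab : d'.factorization p ≤ d.factorization p := by
      have := (Nat.factorization_le_iff_dvd hd'.ne' hd.ne').mpr hdd
      exact this p
    omega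
  exact Nat.eq_of_factorization_eq hX.ne' hY.ne' (fun p => by rw [hfact])

lemma gcd_dvd_upsilon_mul {n d' d : ℕ} (hn : 0 < n) (hd' : 0 < d') (hd : 0 < d) (hdd : d' ∣ d) :
    Nat.gcd d n ∣ upsilon n d' d * (d / d') := by
  rw [upsilon_eq hn hd' hd hdd]
  set A := Nat.gcd d n with hA
  set g := Nat.gcd A (d / d') with hg
  have hgA : g ∣ A := Nat.gcd_dvd_left _ _
  have hge : g ∣ d / d' := Nat.gcd_dvd_right _ _
  obtain ⟨e', he'⟩ := hge
  calc A ∣ A * e' := Dvd.intro e' rfl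
    _ = A / g * (d / d') := by
        rw [he', ← mul_assoc, Nat.div_mul_cancel hgA]

/-! ### ZMod homomorphisms -/

lemma zmod_hom_exists (u n : ℕ) (hn : 0 < n) (hu0 : 0 < u) (hdvd : u ∣ n) :
    ∃ φ : ZMod u →+ ZMod n, ∀ x : ZMod n, u • x = 0 → ∃ y, φ y = x := by
  haveI : NeZero n := ⟨hn.ne'⟩
  haveI : NeZero u := ⟨hu0.ne'⟩
  set t : ZMod n := ((n / u : ℕ) : ZMod n) with ht
  have hf : (zmultiplesHom (ZMod n) t) (u : ℤ) = 0 := by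
    show (u : ℤ) • t = 0
    rw [natCast_zsmul, ht, nsmul_eq_mul, ← Nat.cast_mul,
      Nat.mul_div_cancel' hdvd, ZMod.natCast_self]
  set φ : ZMod u →+ ZMod n := ZMod.lift u ⟨zmultiplesHom (ZMod n) t, hf⟩ with hφ
  have hcoe : ∀ k : ℕ, φ ((k : ℕ) : ZMod u) = ((k * (n / u) : ℕ) : ZMod n) := by
    intro k
    have h1 : ((k : ℕ) : ZMod u) = ((k : ℤ) : ZMod u) := by push_cast; rfl
    rw [h1, hφ, ZMod.lift_coe]
    show (k : ℤ) • t = _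
    rw [natCast_zsmul, nsmul_eq_mul, ← Nat.cast_mul]
  refine ⟨φ, fun x hx => ?_⟩
  have hval : x = ((x.val : ℕ) : ZMod n) := (ZMod.natCast_zmod_val x).symm
  have hx2 : ((u * x.val : ℕ) : ZMod n) = 0 := by
    rw [Nat.cast_mul, ← nsmul_eq_mul]
    rw [← hval]
    exact hx
  have hdvd2 : n ∣ u * x.val := (ZMod.natCast_eq_zero_iff _ _).mp hx2
  have hw : (n / u) ∣ x.val := by
    have h3 : u * (n / u) ∣ u * x.val := by rwa [Nat.mul_div_cancel' hdvd]
    exact (Nat.mul_dvd_mul_iff_left hu0).mp h3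
  refine ⟨((x.val / (n / u) : ℕ) : ZMod u), ?_⟩
  rw [hcoe, Nat.div_mul_cancel hw, ← hval]

lemma chi_exists {r : ℕ} (u nn : Fin r → ℕ) (hnn : ∀ i, 0 < nn i) (hu0 : ∀ i, 0 < u i)
    (hu : ∀ i, u i ∣ nn i) :
    ∃ χ : (∀ i, ZMod (u i)) →+ (∀ i, ZMod (nn i)),
      ∀ x : ∀ i, ZMod (nn i), (∀ i, u i • x i = 0) → ∃ y, χ y = x := by
  choose φ hφ using fun i => zmod_hom_exists (u i) (nn i) (hnn i) (hu0 i) (hu i)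
  refine ⟨{ toFun := fun h i => φ i (h i),
            map_zero' := by funext i; simp,
            map_add' := by intro a b; funext i; simp }, ?_⟩
  intro x hx
  choose y hy using fun i => hφ i (x i) (hx i)
  exact ⟨y, funext hy⟩

lemma zmod_nsmul_self (m : ℕ) (x : ZMod m) : m • x = 0 := by
  rw [nsmul_eq_mul, ZMod.natCast_self, zero_mul]

/-! ### Grouping lemmas -/

section grp
variable {G : Type*} [AddCommGroup G]

lemma sum_card_filter_divisors {α : Type*} (f : α → ℕ) (d : ℕ) (hd : d ≠ 0) (S : Multiset α) :
    ∑ d' ∈ d.divisors, Multiset.card (S.filter (fun g => f g = d')) =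
      Multiset.card (S.filter (fun g => f g ∣ d)) := by
  induction S using Multiset.induction with
  | empty => simp
  | cons a S ih =>
    by_cases h : f a ∣ d
    · have hmem : f a ∈ d.divisors := Nat.mem_divisors.mpr ⟨h, hd⟩
      rw [Multiset.filter_cons_of_pos (p := fun g => f g ∣ d) _ h]
      have : ∀ d' ∈ d.divisors, Multiset.card ((a ::ₘ S).filter (fun g => f g = d')) =
          Multiset.card (S.filter (fun g => f g = d')) + if f a = d' then 1 else 0 := by
        intro d' _
        by_cases he : f a = d'
        · rw [Multiset.filter_cons_of_pos (p := fun g => f g = d') _ he, if_pos he]; simp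
        · rw [Multiset.filter_cons_of_neg (p := fun g => f g = d') _ he, if_neg he]
          simp
      rw [Finset.sum_congr rfl this, Finset.sum_add_distrib, ih, Finset.sum_ite_eq d.divisors]
      simp [hmem]
    · rw [Multiset.filter_cons_of_neg (p := fun g => f g ∣ d) _ h]
      have : ∀ d' ∈ d.divisors, Multiset.card ((a ::ₘ S).filter (fun g => f g = d')) =
          Multiset.card (S.filter (fun g => f g = d')) := by
        intro d' hd'
        have : f a ≠ d' := fun he => h (he ▸ (Nat.mem_divisors.mp hd').1)
        rw [Multiset.filter_cons_of_neg (p := fun g => f g = d') _ this]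
      rw [Finset.sum_congr rfl this, ih]

lemma crossNumber_group (N : ℕ) (hN : N ≠ 0)
    (h : ∀ g : G, addOrderOf g ∣ N) (S : Multiset G) :
    crossNumber S = ∑ d ∈ N.divisors,
      (Multiset.card (S.filter (fun g => addOrderOf g = d)) : ℝ) / d := by
  induction S using Multiset.induction with
  | empty => simp [crossNumber]
  | cons a S ih =>
    have hmem : addOrderOf a ∈ N.divisors := Nat.mem_divisors.mpr ⟨h a, hN⟩
    have step : ∀ d ∈ N.divisors,
        (Multiset.card ((a ::ₘ S).filter (fun g => addOrderOf g = d)) : ℝ) / d =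
        (Multiset.card (S.filter (fun g => addOrderOf g = d)) : ℝ) / d +
          if addOrderOf a = d then 1 / (d : ℝ) else 0 := by
      intro d _
      by_cases he : addOrderOf a = d
      · rw [Multiset.filter_cons_of_pos (p := fun g => addOrderOf g = d) _ he, if_pos he]
        push_cast [Multiset.card_cons]
        ring
      · rw [Multiset.filter_cons_of_neg (p := fun g => addOrderOf g = d) _ he, if_neg he]
        ring
    rw [Finset.sum_congr rfl step, Finset.sum_add_distrib, ← ih,
      Finset.sum_ite_eq N.divisors]
    simp only [hmem, if_pos]
    simp [crossNumber]
    ring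

lemma crossNumber_rat (N : ℕ) (hN : N ≠ 0) (h : ∀ g : G, addOrderOf g ∣ N) (S : Multiset G) :
    ∃ j : ℕ, j ≤ Multiset.card S * N ∧ crossNumber S = (j : ℝ) / N := by
  refine ⟨(S.map fun g => N / addOrderOf g).sum, ?_, ?_⟩
  · have : ∀ x ∈ (S.map fun g => N / addOrderOf g), x ≤ N := by
      intro x hx
      obtain ⟨g, _, rfl⟩ := Multiset.mem_map.mp hx
      exact Nat.div_le_self _ _
    have := Multiset.sum_le_card_nsmul _ _ this
    simpa [smul_eq_mul] using this
  · induction S using Multiset.induction with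
    | empty => simp [crossNumber]
    | cons a S ih =>
      rw [crossNumber, Multiset.map_cons, Multiset.sum_cons, ← crossNumber, ih,
        Multiset.map_cons, Multiset.sum_cons]
      have hord0 : addOrderOf a ≠ 0 := by
        intro h0
        exact hN (Nat.eq_zero_of_zero_dvd (h0 ▸ h a))
      have hord : (addOrderOf a : ℝ) ≠ 0 := Nat.cast_ne_zero.mpr hord0
      have hNr : (N : ℝ) ≠ 0 := Nat.cast_ne_zero.mpr hN
      have hcast : ((N / addOrderOf a : ℕ) : ℝ) = (N : ℝ) / addOrderOf a :=
        Nat.cast_div (h a) hord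
      push_cast [hcast]
      field_simp
end grp

section mx
variable (G : Type*) [AddCommGroup G] [Fintype G]

lemma lcn_setFinite :
    ({x : ℝ | ∃ S : Multiset G, IsZeroSumFree S ∧ crossNumber S = x}).Finite := by
  set N := AddMonoid.exponent G with hNdef
  have hN : N ≠ 0 := (exponent_pos' G).ne'
  have hord : ∀ g : G, addOrderOf g ∣ N := fun g => AddMonoid.addOrder_dvd_exponent g
  set B := Fintype.card G * (N - 1) * N with hB
  apply Set.Finite.subset (Set.Finite.image (fun j : ℕ => (j : ℝ) / N) (Set.finite_Iic B))
  rintro x ⟨S, hS, rfl⟩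
  obtain ⟨j, hj1, hj2⟩ := crossNumber_rat N hN hord S
  refine ⟨j, ?_, hj2.symm⟩
  have := zsf_card_le G hS
  simp only [Set.mem_Iic]
  calc j ≤ Multiset.card S * N := hj1
    _ ≤ B := by rw [hB]; exact Nat.mul_le_mul_right _ this

lemma lcn_mem : ∃ S : Multiset G, IsZeroSumFree S ∧ crossNumber S = littleCrossNumber G := by
  have hne : ({x : ℝ | ∃ S : Multiset G, IsZeroSumFree S ∧ crossNumber S = x}).Nonempty :=
    ⟨0, 0, zsf_zero, by simp [crossNumber]⟩
  exact Set.Nonempty.csSup_mem hne (lcn_setFinite G)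

lemma lcn_ub {S : Multiset G} (h : IsZeroSumFree S) : crossNumber S ≤ littleCrossNumber G :=
  le_csSup ((lcn_setFinite G).bddAbove) ⟨S, h, rfl⟩

end mx

theorem stmt1 (r : ℕ) (hr : 0 < r) (n : Fin r → ℕ)
    (hn : ∀ i, 1 < n i) (hdvd : ∀ i j : Fin r, i ≤ j → n i ∣ n j)
    (N : ℕ) (hN : N = n ⟨r - 1, by omega⟩) :
    ∃ x : ℕ → ℕ,
      (∀ d ∈ N.divisors, ∀ d' ∈ d.divisors, 1 < d' →
        x d ≤ etaConst (∀ i : Fin r, ZMod (upsilon (n i) d' d)) - 1) ∧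
      (∀ d ∈ N.divisors,
        ∑ d' ∈ d.divisors, x d' ≤ davenport (∀ i : Fin r, ZMod (upsilon (n i) d d)) - 1) ∧
      littleCrossNumber (∀ i : Fin r, ZMod (n i)) ≤ ∑ d ∈ N.divisors, (x d : ℝ) / d := by
  classical
  haveI : ∀ i, NeZero (n i) := fun i => ⟨by have := hn i; omega⟩
  set G := ∀ i : Fin r, ZMod (n i) with hG
  have hnpos : ∀ i, 0 < n i := fun i => lt_trans one_pos (hn i)
  have hNpos : 0 < N := by rw [hN]; exact hnpos _
  have hniN : ∀ i, n i ∣ N := by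
    intro i
    rw [hN]
    exact hdvd i ⟨r - 1, by omega⟩ (by exact Nat.le_sub_one_of_lt i.isLt)
  -- every element of G has order dividing its component moduli, hence dividing N
  have hcomp : ∀ (g : G) (m : ℕ), m • g = 0 → ∀ i, m • g i = 0 := by
    intro g m hm i
    have := congrFun hm i
    exact this
  have hordN : ∀ g : G, addOrderOf g ∣ N := by
    intro g
    rw [addOrderOf_dvd_iff_nsmul_eq_zero]
    funext i
    have h1 : addOrderOf (g i) ∣ n i := by
      rw [addOrderOf_dvd_iff_nsmul_eq_zero]
      exact zmod_nsmul_self (n i) (g i)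
    have h2 : addOrderOf (g i) ∣ N := h1.trans (hniN i)
    have := addOrderOf_dvd_iff_nsmul_eq_zero.mp h2
    exact this
  -- pick an extremal zero-sumfree sequence of minimal length
  obtain ⟨S₀, hS₀zsf, hS₀⟩ := lcn_mem G
  set K := littleCrossNumber G with hK
  set C := {m : ℕ | ∃ S : Multiset G, IsZeroSumFree S ∧ crossNumber S = K ∧
    Multiset.card S = m} with hC
  have hCne : C.Nonempty := ⟨_, S₀, hS₀zsf, hS₀, rfl⟩
  obtain ⟨S, hSzsf, hSK, hScard⟩ := Nat.sInf_mem hCne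
  have hmin : ∀ S' : Multiset G, IsZeroSumFree S' → crossNumber S' = K →
      Multiset.card S ≤ Multiset.card S' := by
    intro S' h1 h2
    rw [hScard]
    exact Nat.sInf_le ⟨S', h1, h2, rfl⟩
  refine ⟨fun d => Multiset.card (S.filter (fun g => addOrderOf g = d)), ?_, ?_, ?_⟩
  · -- η constraints
    intro d hd d' hd' hd'1
    have hdN : d ∣ N := (Nat.mem_divisors.mp hd).1
    have hdpos : 0 < d := Nat.pos_of_dvd_of_pos hdN hNpos
    have hd'd : d' ∣ d := (Nat.mem_divisors.mp hd').1
    have hd'pos : 0 < d' := lt_trans one_pos hd'1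
    set u : Fin r → ℕ := fun i => upsilon (n i) d' d with hu
    haveI : ∀ i, NeZero (u i) := fun i => ⟨(upsilon_pos hd'pos).ne'⟩
    set H := ∀ i : Fin r, ZMod (u i) with hH
    obtain ⟨hη1, hη2⟩ := eta_spec H
    -- it suffices to derive a contradiction from x d ≥ etaConst H
    rw [show etaConst (∀ i : Fin r, ZMod (upsilon (n i) d' d)) = etaConst H from rfl]
    by_contra hcon
    push_neg at hcon
    have hxd : etaConst H ≤ Multiset.card (S.filter (fun g => addOrderOf g = d)) := by
      omega
    set Sd := S.filter (fun g => addOrderOf g = d) with hSd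
    set e := d / d' with he
    have hepos : 0 < e := Nat.div_pos (Nat.le_of_dvd hdpos hd'd) hd'pos
    have hde : d' * e = d := Nat.mul_div_cancel' hd'd
    -- exponent of H divides d'
    have hexpH : AddMonoid.exponent H ≤ d' := by
      have hdvdexp : AddMonoid.exponent H ∣ d' := by
        apply AddMonoid.exponent_dvd_of_forall_nsmul_eq_zero
        intro h
        funext i
        have h1 : addOrderOf (h i) ∣ u i := by
          rw [addOrderOf_dvd_iff_nsmul_eq_zero]
          exact zmod_nsmul_self (u i) (h i)
        have h2 : addOrderOf (h i) ∣ d' := h1.trans upsilon_dvd_d'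
        have := addOrderOf_dvd_iff_nsmul_eq_zero.mp h2
        exact this
      exact Nat.le_of_dvd hd'pos hdvdexp
    -- the map ψ = (e • ·) sends Sd into u-torsion
    have htor : ∀ g : G, g ∈ Sd → ∀ i, u i • ((e • g) i) = 0 := by
      intro g hg i
      have hgd : addOrderOf g = d := (Multiset.mem_filter.mp hg).2
      have hgi : addOrderOf (g i) ∣ Nat.gcd d (n i) := by
        apply Nat.dvd_gcd
        · rw [addOrderOf_dvd_iff_nsmul_eq_zero]
          have : d • g = 0 := by
            rw [← hgd]; exact addOrderOf_nsmul_eq_zero g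
          have := congrFun this i
          exact this
        · rw [addOrderOf_dvd_iff_nsmul_eq_zero]
          exact zmod_nsmul_self (n i) (g i)
      have hdd : Nat.gcd d (n i) ∣ u i * e :=
        gcd_dvd_upsilon_mul (hnpos i) hd'pos hdpos hd'd
      have : addOrderOf (g i) ∣ u i * e := hgi.trans hdd
      have h0 : (u i * e) • g i = 0 := addOrderOf_dvd_iff_nsmul_eq_zero.mp this
      have heq : (e • g) i = e • g i := rfl
      rw [heq, smul_smul]
      exact h0
    -- build chi and pull back
    obtain ⟨χ, hχ⟩ := chi_exists u n hnpos (fun i => upsilon_pos hd'pos)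
      (fun i => upsilon_dvd_n)
    set p : G → H := fun g => if h : ∃ y, χ y = g then Classical.choose h else 0 with hp
    set M := Sd.map (fun g : G => e • g) with hM
    have hcp : ∀ m ∈ M, χ (p m) = m := by
      intro m hm
      obtain ⟨g, hg, rfl⟩ := Multiset.mem_map.mp hm
      have hex : ∃ y, χ y = e • g := hχ _ (htor g hg)
      rw [hp]
      simp only [dif_pos hex]
      exact Classical.choose_spec hex
    have hcardM : etaConst H ≤ Multiset.card (M.map p) := by
      rw [Multiset.card_map, hM, Multiset.card_map]
      exact hxd
    obtain ⟨T₁, hT₁le, hT₁ne, hT₁card, hT₁sum⟩ := hη2 (M.map p) hcardM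
    set T₂ := T₁.map χ with hT₂
    have hMe : Multiset.map (fun m => χ (p m)) M = M := by
      conv_rhs => rw [← Multiset.map_id' M]
      exact Multiset.map_congr rfl hcp
    have hT₂le : T₂ ≤ M := by
      have h1 : T₂ ≤ (M.map p).map χ := Multiset.map_le_map hT₁le
      rw [Multiset.map_map] at h1
      exact le_trans h1 (le_of_eq hMe)
    have hT₂sum : T₂.sum = 0 := by
      rw [hT₂, ← map_multiset_sum, hT₁sum, map_zero]
    have hT₂ne : T₂ ≠ 0 := by
      rw [hT₂]; simpa using hT₁ne
    have hT₂card : Multiset.card T₂ ≤ d' := by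
      rw [hT₂, Multiset.card_map]
      exact le_trans hT₁card hexpH
    -- pull back along ψ
    obtain ⟨T, hTle, hTmap⟩ := pullback_le_map T₂ Sd hT₂le
    have hTcard : Multiset.card T ≤ d' := by
      rw [← Multiset.card_map (fun g : G => e • g) T, hTmap]
      exact hT₂card
    have hTne : T ≠ 0 := by
      intro h0
      rw [h0] at hTmap
      exact hT₂ne (hTmap ▸ rfl)
    have hTS : T ≤ S := hTle.trans (Multiset.filter_le _ S)
    have hTord : ∀ g ∈ T, addOrderOf g = d := by
      intro g hg
      exact (Multiset.mem_filter.mp (Multiset.mem_of_le hTle hg)).2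
    set y := T.sum with hy
    have hey : e • y = 0 := by
      rw [hy, Multiset.smul_sum, hTmap, hT₂sum]
    have hordy : addOrderOf y ∣ e := addOrderOf_dvd_iff_nsmul_eq_zero.mpr hey
    have hyne : y ≠ 0 := hSzsf T hTS hTne
    have hordypos : 0 < addOrderOf y := by
      rcases Nat.eq_zero_or_pos (addOrderOf y) with h0 | h0
      · exfalso
        have := Nat.eq_zero_of_zero_dvd (h0 ▸ hordy)
        omega
      · exact h0
    have hordyle : addOrderOf y ≤ e := Nat.le_of_dvd hepos hordy
    have hTcard2 : 2 ≤ Multiset.card T := by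
      rcases Nat.lt_or_ge (Multiset.card T) 2 with hlt | hge
      · exfalso
        interval_cases hcT : Multiset.card T
        · exact hTne (Multiset.card_eq_zero.mp hcT)
        · obtain ⟨g, hgT⟩ := Multiset.card_eq_one.mp hcT
          have hgd : addOrderOf g = d := hTord g (by rw [hgT]; simp)
          have hgy : y = g := by rw [hy, hgT]; simp
          have hdve : d ∣ e := by rw [← hgd, ← hgy]; exact hordy
          have h1 : d ≤ e := Nat.le_of_dvd hepos hdve
          have h2 : e ≤ d := Nat.le_of_dvd hdpos ⟨d', by rw [mul_comm]; omega⟩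
          have he2 : e = d := le_antisymm h2 h1
          have hA : 2 * d ≤ d' * d := Nat.mul_le_mul_right d hd'1
          have hB : d' * d = d := by rw [he2] at hde; exact hde
          rw [hB] at hA
          omega
      · exact hge
    -- replacement: S' = y ::ₘ (S - T)
    set S' := y ::ₘ (S - T) with hS'
    have hS'zsf : IsZeroSumFree S' := by
      intro U hU hUne hUsum
      by_cases hyU : y ∈ U
      · set U' := (U.erase y) + T with hU'
        have h1 : U.erase y ≤ S - T := by
          have := Multiset.erase_le_erase y hU
          rwa [Multiset.erase_cons_head] at this
        have h2 : U' ≤ S := by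
          calc U' ≤ (S - T) + T := add_le_add h1 le_rfl
            _ = S := tsub_add_cancel_of_le hTS
        have hUsum' : y + (U.erase y).sum = 0 := by
          rw [← Multiset.sum_cons, Multiset.cons_erase hyU]
          exact hUsum
        have h3 : U'.sum = 0 := by
          rw [hU', Multiset.sum_add, ← hy]
          have : (U.erase y).sum = -y := (neg_eq_of_add_eq_zero_right hUsum').symm
          rw [this]
          abel
        have h4 : U' ≠ 0 := by
          intro h0
          have := congrArg Multiset.card h0
          simp only [hU', Multiset.card_add, Multiset.card_zero] at this
          omega
        exact hSzsf U' h2 h4 h3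
      · have hUle : U ≤ S - T := by
          rw [Multiset.le_iff_count]
          intro a
          have hcount := Multiset.le_iff_count.mp hU a
          rw [hS'] at hcount
          by_cases hay : a = y
          · subst hay
            simp [Multiset.count_eq_zero.mpr hyU]
          · rwa [Multiset.count_cons_of_ne hay] at hcount
        exact hSzsf U (hUle.trans tsub_le_self) hUne hUsum
    have hcards : Multiset.card S' = Multiset.card S - Multiset.card T + 1 := by
      rw [hS', Multiset.card_cons, Multiset.card_sub hTS]
    have hTcardS : Multiset.card T ≤ Multiset.card S := Multiset.card_le_card hTS
    have hcnT : crossNumber T = (Multiset.card T : ℝ) / d := by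
      rw [crossNumber]
      have hrep : T.map (fun g => (1:ℝ)/(addOrderOf g)) =
          Multiset.replicate (Multiset.card T) ((1:ℝ)/d) := by
        apply Multiset.eq_replicate.mpr
        refine ⟨Multiset.card_map _ _, ?_⟩
        intro b hb
        obtain ⟨g, hg, rfl⟩ := Multiset.mem_map.mp hb
        rw [hTord g hg]
      rw [hrep, Multiset.sum_replicate, nsmul_eq_mul]
      ring
    have hcnS : crossNumber S = crossNumber (S - T) + crossNumber T := by
      conv_lhs => rw [← tsub_add_cancel_of_le hTS]
      rw [crossNumber_add]
    have hcnS' : crossNumber S' = 1/((addOrderOf y : ℕ) : ℝ) + crossNumber (S - T) := by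
      rw [hS', crossNumber_cons]
    have hr1 : (Multiset.card T : ℝ)/d ≤ 1/((addOrderOf y : ℕ) : ℝ) := by
      have hdr : (0:ℝ) < d := by exact_mod_cast hdpos
      have hyr : (0:ℝ) < ((addOrderOf y : ℕ) : ℝ) := by exact_mod_cast hordypos
      rw [div_le_div_iff₀ hdr hyr]
      have hnat : Multiset.card T * addOrderOf y ≤ d' * e := Nat.mul_le_mul hTcard hordyle
      have : Multiset.card T * addOrderOf y ≤ d := by omega
      calc (Multiset.card T : ℝ) * ((addOrderOf y : ℕ) : ℝ)
          = ((Multiset.card T * addOrderOf y : ℕ) : ℝ) := by push_cast; ring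
        _ ≤ (d : ℝ) := by exact_mod_cast this
        _ = 1 * (d : ℝ) := by ring
    have hge : crossNumber S ≤ crossNumber S' := by
      rw [hcnS', hcnS, hcnT]
      linarith
    have hle : crossNumber S' ≤ K := lcn_ub G hS'zsf
    have hKS' : crossNumber S' = K := le_antisymm hle (by rw [← hSK]; exact hge)
    have := hmin S' hS'zsf hKS'
    omega
  · -- Davenport constraints
    intro d hd
    have hdN : d ∣ N := (Nat.mem_divisors.mp hd).1
    have hdpos : 0 < d := Nat.pos_of_dvd_of_pos hdN hNpos
    set u : Fin r → ℕ := fun i => upsilon (n i) d d with hu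
    haveI : ∀ i, NeZero (u i) := fun i => ⟨(upsilon_pos hdpos).ne'⟩
    set H := ∀ i : Fin r, ZMod (u i) with hH
    obtain ⟨hD1, hD2⟩ := davenport_spec H
    rw [show davenport (∀ i : Fin r, ZMod (upsilon (n i) d d)) = davenport H from rfl]
    have hsum : ∑ d' ∈ d.divisors,
        Multiset.card (S.filter (fun g => addOrderOf g = d')) =
        Multiset.card (S.filter (fun g => addOrderOf g ∣ d)) :=
      sum_card_filter_divisors (fun g : G => addOrderOf g) d hdpos.ne' S
    rw [hsum]
    set F := S.filter (fun g => addOrderOf g ∣ d) with hF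
    by_contra hcon
    push_neg at hcon
    have hxd : davenport H ≤ Multiset.card F := by omega
    have htor : ∀ g : G, g ∈ F → ∀ i, u i • g i = 0 := by
      intro g hg i
      have hgd : addOrderOf g ∣ d := (Multiset.mem_filter.mp hg).2
      have hgi : addOrderOf (g i) ∣ Nat.gcd d (n i) := by
        apply Nat.dvd_gcd
        · rw [addOrderOf_dvd_iff_nsmul_eq_zero]
          have h0 : d • g = 0 := addOrderOf_dvd_iff_nsmul_eq_zero.mp hgd
          have := congrFun h0 i
          exact this
        · rw [addOrderOf_dvd_iff_nsmul_eq_zero]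
          exact zmod_nsmul_self (n i) (g i)
      have hui : u i = Nat.gcd d (n i) := upsilon_self (hnpos i) hdpos
      rw [hui]
      exact addOrderOf_dvd_iff_nsmul_eq_zero.mp hgi
    obtain ⟨χ, hχ⟩ := chi_exists u n hnpos (fun i => upsilon_pos hdpos)
      (fun i => upsilon_dvd_n)
    set p : G → H := fun g => if h : ∃ y, χ y = g then Classical.choose h else 0 with hp
    have hcp : ∀ m ∈ F, χ (p m) = m := by
      intro m hm
      have hex : ∃ y, χ y = m := hχ _ (htor m hm)
      rw [hp]
      simp only [dif_pos hex]
      exact Classical.choose_spec hex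
    have hcardF : davenport H ≤ Multiset.card (F.map p) := by
      rw [Multiset.card_map]
      exact hxd
    obtain ⟨T₁, hT₁le, hT₁ne, hT₁sum⟩ := hD2 (F.map p) hcardF
    set T₂ := T₁.map χ with hT₂
    have hFe : Multiset.map (fun m => χ (p m)) F = F := by
      conv_rhs => rw [← Multiset.map_id' F]
      exact Multiset.map_congr rfl hcp
    have hT₂le : T₂ ≤ F := by
      have h1 : T₂ ≤ (F.map p).map χ := Multiset.map_le_map hT₁le
      rw [Multiset.map_map] at h1
      exact le_trans h1 (le_of_eq hFe)
    have hT₂sum : T₂.sum = 0 := by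
      rw [hT₂, ← map_multiset_sum, hT₁sum, map_zero]
    have hT₂ne : T₂ ≠ 0 := by
      rw [hT₂]; simpa using hT₁ne
    exact hSzsf T₂ (hT₂le.trans (Multiset.filter_le _ S)) hT₂ne hT₂sum
  · -- the cross number bound
    exact le_of_eq (hSK.symm.trans (crossNumber_group N hNpos.ne' hordN S))
end

section
/- Let r ≥ 1 and let n_1, ..., n_r be integers with 1 < n_1 | n_2 | ... | n_r, let G = C_{n_1} ⊕ ... ⊕ C_{n_r}, and let d', d be positive integers with d' | d and d | n_r. Then D_{(d',d)}(G) = D(C_{υ_1(d',d)} ⊕ ... ⊕ C_{υ_r(d',d)}) and η_{(d',d)}(G) = η(C_{υ_1(d',d)} ⊕ ... ⊕ C_{υ_r(d',d)}). -/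
open scoped BigOperators

attribute [local instance] Classical.propDecidable

/-- `D_{(d',d)}(G)`: the smallest `t ≥ 1` such that every sequence over `G_d` of length
at least `t` has a nonempty sub-multiset with sum in `G_{d/d'}`. -/
noncomputable def davenportRel (G : Type*) [AddCommGroup G] (d' d : ℕ) : ℕ :=
  sInf {t | 1 ≤ t ∧ ∀ S : Multiset G, (∀ g ∈ S, d • g = 0) → t ≤ Multiset.card S →
    ∃ T, T ≤ S ∧ T ≠ 0 ∧ (d / d') • T.sum = 0}

/-- `η_{(d',d)}(G)`: as `D_{(d',d)}(G)` but with the sub-multiset of length at most `d'`. -/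
noncomputable def etaRel (G : Type*) [AddCommGroup G] (d' d : ℕ) : ℕ :=
  sInf {t | 1 ≤ t ∧ ∀ S : Multiset G, (∀ g ∈ S, d • g = 0) → t ≤ Multiset.card S →
    ∃ T, T ≤ S ∧ T ≠ 0 ∧ Multiset.card T ≤ d' ∧ (d / d') • T.sum = 0}

set_option linter.unusedVariables false

namespace Stmt2Aux

lemma upsilon_eq (N d' d : ℕ) (hN : 0 < N) (hd' : 0 < d') (hd'd : d' ∣ d) (hd : 0 < d) :
    upsilon N d' d = Nat.gcd d N / Nat.gcd (d / d') N := by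
  obtain ⟨m, rfl⟩ := hd'd
  have hm : 0 < m := by
    rcases Nat.eq_zero_or_pos m with h | h
    · simp [h] at hd
    · exact h
  have hmd : d' * m / d' = m := Nat.mul_div_cancel_left m hd'
  rw [hmd]
  unfold upsilon
  set A := Nat.gcd d' N with hA
  set g := Nat.gcd (d' * m) N with hg
  set e := Nat.gcd m N with he
  set L' := Nat.lcm d' N with hL'
  set L := Nat.lcm (d' * m) N with hL
  set B := L / L' with hB
  have hL'pos : 0 < L' := Nat.pos_of_ne_zero (Nat.lcm_ne_zero hd'.ne' hN.ne')
  have hL'L : L' ∣ L :=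
    Nat.lcm_dvd (dvd_trans (Dvd.intro m rfl) (Nat.dvd_lcm_left _ _)) (Nat.dvd_lcm_right _ _)
  have key : B * g = m * A := by
    apply Nat.eq_of_mul_eq_mul_right hL'pos
    have h1 : B * L' = L := Nat.div_mul_cancel hL'L
    calc B * g * L' = (B * L') * g := by ring
      _ = L * g := by rw [h1]
      _ = g * L := mul_comm _ _
      _ = d' * m * N := Nat.gcd_mul_lcm _ _
      _ = m * (A * L') := by rw [Nat.gcd_mul_lcm]; ring
      _ = m * A * L' := by ring
  have h3 : Nat.gcd g m = e := by
    rw [hg, Nat.gcd_comm (d' * m) N, Nat.gcd_assoc, Nat.gcd_eq_right (dvd_mul_left m d'),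
      he, Nat.gcd_comm]
  have key2 : Nat.gcd A B * g = A * e := by
    have h1 : Nat.gcd A B * g = Nat.gcd (A * g) (B * g) := (Nat.gcd_mul_right _ _ _).symm
    have h2 : Nat.gcd (A * g) (m * A) = A * Nat.gcd g m := by
      rw [mul_comm m A]; exact Nat.gcd_mul_left A g m
    rw [h1, key, h2, h3]
  have Apos : 0 < A := Nat.gcd_pos_of_pos_left N hd'
  have gABpos : 0 < Nat.gcd A B := Nat.gcd_pos_of_pos_left B Apos
  have epos : 0 < e := Nat.gcd_pos_of_pos_left N hm
  obtain ⟨k, hk⟩ := Nat.gcd_dvd_left A B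
  have h4 : A / Nat.gcd A B = k := Nat.div_eq_of_eq_mul_right gABpos hk
  have h5 : g = k * e := by
    apply Nat.eq_of_mul_eq_mul_left gABpos
    rw [key2]
    conv_lhs => rw [hk]
    ring
  have h6 : g / e = k := by rw [h5]; exact Nat.mul_div_cancel k epos
  rw [h4, h6]


lemma nat_dvd_iff (N d v : ℕ) (hd : 0 < d) :
    N ∣ d * v ↔ (N / Nat.gcd d N) ∣ v := by
  set g := Nat.gcd d N with hg
  have hgpos : 0 < g := Nat.gcd_pos_of_pos_left N hd
  have hgN : g ∣ N := Nat.gcd_dvd_right d N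
  have hgd : g ∣ d := Nat.gcd_dvd_left d N
  have hN' : (N / g) * g = N := Nat.div_mul_cancel hgN
  have hd2 : (d / g) * g = d := Nat.div_mul_cancel hgd
  have hco : Nat.Coprime (N / g) (d / g) := (Nat.coprime_div_gcd_div_gcd hgpos).symm
  constructor
  · intro h
    have h2 : (N / g) ∣ (d / g) * v := by
      rw [← Nat.mul_dvd_mul_iff_right hgpos, hN']
      calc N ∣ d * v := h
        _ = (d / g) * v * g := by rw [mul_right_comm, hd2]
    exact (hco.dvd_mul_left).mp h2
  · rintro ⟨a, rfl⟩
    refine ⟨(d / g) * a, ?_⟩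
    calc d * (N / g * a) = (d / g * g) * (N / g * a) := by rw [hd2]
      _ = (N / g * g) * (d / g * a) := by ring
      _ = N * (d / g * a) := by rw [hN']


section Component

variable {N d' d : ℕ}

lemma e_dvd_g (hd'd : d' ∣ d) : Nat.gcd (d / d') N ∣ Nat.gcd d N :=
  Nat.dvd_gcd ((Nat.gcd_dvd_left _ _).trans (Nat.div_dvd_of_dvd hd'd)) (Nat.gcd_dvd_right _ _)

lemma upsilon_mul (hN : 0 < N) (hd' : 0 < d') (hd'd : d' ∣ d) (hd : 0 < d) :
    upsilon N d' d * Nat.gcd (d / d') N = Nat.gcd d N := by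
  rw [upsilon_eq N d' d hN hd' hd'd hd]
  exact Nat.div_mul_cancel (e_dvd_g hd'd)

lemma upsilon_dvd_g (hN : 0 < N) (hd' : 0 < d') (hd'd : d' ∣ d) (hd : 0 < d) :
    upsilon N d' d ∣ Nat.gcd d N :=
  ⟨_, (upsilon_mul hN hd' hd'd hd).symm⟩

lemma upsilon_pos (hN : 0 < N) (hd' : 0 < d') (hd'd : d' ∣ d) (hd : 0 < d) :
    0 < upsilon N d' d := by
  rcases Nat.eq_zero_or_pos (upsilon N d' d) with h | h
  · exfalso
    have := upsilon_mul (N := N) hN hd' hd'd hd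
    rw [h, zero_mul] at this
    exact absurd this.symm (Nat.gcd_pos_of_pos_left N hd).ne'
  · exact h

lemma upsilon_dvd_d' (hN : 0 < N) (hd' : 0 < d') (hd'd : d' ∣ d) (hd : 0 < d) :
    upsilon N d' d ∣ d' := by
  have hepos : 0 < Nat.gcd (d / d') N := Nat.gcd_pos_of_pos_right _ hN
  have h2 : d' * Nat.gcd (d / d') N = Nat.gcd d (d' * N) := by
    rw [← Nat.gcd_mul_left, Nat.mul_div_cancel' hd'd]
  have h1 : Nat.gcd d N ∣ d' * Nat.gcd (d / d') N := by
    rw [h2]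
    exact Nat.dvd_gcd (Nat.gcd_dvd_left d N) ((Nat.gcd_dvd_right d N).trans (dvd_mul_left N d'))
  have h3 : upsilon N d' d * Nat.gcd (d / d') N ∣ d' * Nat.gcd (d / d') N := by
    rw [upsilon_mul hN hd' hd'd hd]
    exact h1
  exact (Nat.mul_dvd_mul_iff_right hepos).mp h3

lemma mker_iff (hN : 0 < N) (hd' : 0 < d') (hd'd : d' ∣ d) (hd : 0 < d) (a : ℕ) :
    Nat.gcd d N ∣ (d / d') * a ↔ upsilon N d' d ∣ a := by
  set m := d / d' with hm
  set g := Nat.gcd d N with hgdef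
  set e := Nat.gcd m N with hedef
  have hem : e ∣ m := Nat.gcd_dvd_left _ _
  have heg : e ∣ g := e_dvd_g hd'd
  have hepos : 0 < e := Nat.gcd_pos_of_pos_right _ hN
  have hgm : Nat.gcd m g = e := by
    rw [hgdef, ← Nat.gcd_assoc, Nat.gcd_eq_left (Nat.div_dvd_of_dvd hd'd)]
  have hco : Nat.Coprime (g / e) (m / e) := by
    have h := Nat.coprime_div_gcd_div_gcd (m := m) (n := g) (hgm ▸ hepos)
    rw [hgm] at h
    exact h.symm
  have hue : upsilon N d' d = g / e := upsilon_eq N d' d hN hd' hd'd hd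
  rw [hue]
  constructor
  · intro h
    have h2 : (g / e) * e ∣ ((m / e) * a) * e := by
      rw [Nat.div_mul_cancel heg, mul_right_comm, Nat.div_mul_cancel hem]
      exact h
    exact (hco.dvd_mul_left).mp ((Nat.mul_dvd_mul_iff_right hepos).mp h2)
  · rintro ⟨b, rfl⟩
    refine ⟨(m / e) * b, ?_⟩
    calc m * (g / e * b) = (m / e * e) * (g / e * b) := by rw [Nat.div_mul_cancel hem]
      _ = (g / e * e) * (m / e * b) := by ring
      _ = g * (m / e * b) := by rw [Nat.div_mul_cancel heg]

lemma tors_iff (hN : 0 < N) (hd : 0 < d) (x : ZMod N) :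
    d • x = 0 ↔ (N / Nat.gcd d N) ∣ x.val := by
  haveI : NeZero N := ⟨hN.ne'⟩
  have h1 : d • x = ((d * x.val : ℕ) : ZMod N) := by
    rw [Nat.cast_mul, ZMod.natCast_zmod_val, nsmul_eq_mul]
  rw [h1, ZMod.natCast_eq_zero_iff, nat_dvd_iff N d x.val hd]

/-- The component projection map. -/
def pic (N d' d : ℕ) (x : ZMod N) : ZMod (upsilon N d' d) :=
  ((x.val / (N / Nat.gcd d N) : ℕ) : ZMod (upsilon N d' d))

/-- The component section map. -/
def sic (N d' d : ℕ) (c : ZMod (upsilon N d' d)) : ZMod N :=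
  ((c.val * (N / Nat.gcd d N) : ℕ) : ZMod N)

lemma q_pos (hN : 0 < N) : 0 < N / Nat.gcd d N :=
  Nat.div_pos (Nat.le_of_dvd hN (Nat.gcd_dvd_right d N)) (Nat.gcd_pos_of_pos_right d hN)

lemma val_mul_q (hN : 0 < N) (a : ℕ) :
    (((a * (N / Nat.gcd d N) : ℕ) : ZMod N)).val = (a % Nat.gcd d N) * (N / Nat.gcd d N) := by
  haveI : NeZero N := ⟨hN.ne'⟩
  rw [ZMod.val_natCast]
  have h := Nat.mul_mod_mul_right (N / Nat.gcd d N) a (Nat.gcd d N)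
  rwa [Nat.mul_div_cancel' (Nat.gcd_dvd_right d N)] at h

lemma pic_natCast (hN : 0 < N) (hd' : 0 < d') (hd'd : d' ∣ d) (hd : 0 < d) (a : ℕ) :
    pic N d' d ((a * (N / Nat.gcd d N) : ℕ) : ZMod N) = (a : ZMod (upsilon N d' d)) := by
  unfold pic
  rw [val_mul_q hN a, Nat.mul_div_cancel _ (q_pos (d := d) hN)]
  rw [ZMod.natCast_eq_natCast_iff]
  exact (Nat.mod_modEq a (Nat.gcd d N)).of_dvd (upsilon_dvd_g hN hd' hd'd hd)

lemma pic_add (hN : 0 < N) (hd' : 0 < d') (hd'd : d' ∣ d) (hd : 0 < d) (x y : ZMod N)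
    (hx : (N / Nat.gcd d N) ∣ x.val) (hy : (N / Nat.gcd d N) ∣ y.val) :
    pic N d' d (x + y) = pic N d' d x + pic N d' d y := by
  haveI : NeZero N := ⟨hN.ne'⟩
  obtain ⟨a, ha⟩ := hx
  obtain ⟨b, hb⟩ := hy
  have hx' : x = ((a * (N / Nat.gcd d N) : ℕ) : ZMod N) := by
    rw [mul_comm, ← ha, ZMod.natCast_zmod_val]
  have hy' : y = ((b * (N / Nat.gcd d N) : ℕ) : ZMod N) := by
    rw [mul_comm, ← hb, ZMod.natCast_zmod_val]
  rw [hx', hy', ← Nat.cast_add, ← add_mul, pic_natCast hN hd' hd'd hd,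
    pic_natCast hN hd' hd'd hd, pic_natCast hN hd' hd'd hd, Nat.cast_add]

lemma nat_aux2 (g q m a : ℕ) (hq : 0 < q) : g * q ∣ m * (q * a) ↔ g ∣ m * a := by
  rw [show m * (q * a) = (m * a) * q by ring]
  exact Nat.mul_dvd_mul_iff_right hq

lemma smul_eq_zero_iff_nat (hN : 0 < N) (k : ℕ) (x : ZMod N) :
    k • x = 0 ↔ N ∣ k * x.val := by
  haveI : NeZero N := ⟨hN.ne'⟩
  have h1 : k • x = ((k * x.val : ℕ) : ZMod N) := by
    rw [Nat.cast_mul, ZMod.natCast_zmod_val, nsmul_eq_mul]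
  rw [h1, ZMod.natCast_eq_zero_iff]

lemma pic_eq_zero_iff (hN : 0 < N) (hd' : 0 < d') (hd'd : d' ∣ d) (hd : 0 < d) (x : ZMod N)
    (hx : (N / Nat.gcd d N) ∣ x.val) :
    pic N d' d x = 0 ↔ (d / d') • x = 0 := by
  haveI : NeZero N := ⟨hN.ne'⟩
  haveI : NeZero (upsilon N d' d) := ⟨(upsilon_pos hN hd' hd'd hd).ne'⟩
  obtain ⟨a, ha⟩ := hx
  have hx' : x = ((a * (N / Nat.gcd d N) : ℕ) : ZMod N) := by
    rw [mul_comm, ← ha, ZMod.natCast_zmod_val]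
  have ha : x.val = (N / Nat.gcd d N) * a := ha
  have h1 : pic N d' d x = 0 ↔ upsilon N d' d ∣ a := by
    rw [hx', pic_natCast hN hd' hd'd hd, ZMod.natCast_eq_zero_iff]
  have h2 : (d / d') • x = 0 ↔ Nat.gcd d N ∣ (d / d') * a := by
    rw [smul_eq_zero_iff_nat hN, ha]
    have h := nat_aux2 (Nat.gcd d N) (N / Nat.gcd d N) (d / d') a (q_pos (d := d) hN)
    rwa [Nat.mul_div_cancel' (Nat.gcd_dvd_right d N)] at h
  rw [h1, h2, mker_iff hN hd' hd'd hd a]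

lemma sic_tors (hN : 0 < N) (hd : 0 < d) (c : ZMod (upsilon N d' d)) :
    d • sic N d' d c = 0 := by
  haveI : NeZero N := ⟨hN.ne'⟩
  rw [tors_iff hN hd]
  unfold sic
  rw [val_mul_q hN]
  exact dvd_mul_left _ _

lemma pic_sic (hN : 0 < N) (hd' : 0 < d') (hd'd : d' ∣ d) (hd : 0 < d)
    (c : ZMod (upsilon N d' d)) : pic N d' d (sic N d' d c) = c := by
  haveI : NeZero (upsilon N d' d) := ⟨(upsilon_pos hN hd' hd'd hd).ne'⟩
  unfold sic
  rw [pic_natCast hN hd' hd'd hd, ZMod.natCast_zmod_val]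

end Component


section PiLevel

variable {r : ℕ} {n : Fin r → ℕ} {d' d : ℕ}

def piP (n : Fin r → ℕ) (d' d : ℕ) (x : ∀ i, ZMod (n i)) : ∀ i, ZMod (upsilon (n i) d' d) :=
  fun i => pic (n i) d' d (x i)

def siP (n : Fin r → ℕ) (d' d : ℕ) (c : ∀ i, ZMod (upsilon (n i) d' d)) : ∀ i, ZMod (n i) :=
  fun i => sic (n i) d' d (c i)

lemma tors_apply {x : ∀ i, ZMod (n i)} (hx : d • x = 0) (i : Fin r) : d • x i = 0 := by
  have := congrFun hx i
  simpa using this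

lemma tors_val {x : ∀ i, ZMod (n i)} (hn : ∀ i, 0 < n i) (hd : 0 < d) (hx : d • x = 0)
    (i : Fin r) : (n i / Nat.gcd d (n i)) ∣ (x i).val :=
  (tors_iff (hn i) hd (x i)).mp (tors_apply hx i)

lemma siP_tors (hn : ∀ i, 0 < n i) (hd : 0 < d) (c : ∀ i, ZMod (upsilon (n i) d' d)) :
    d • siP n d' d c = 0 := by
  ext i
  rw [Pi.smul_apply, Pi.zero_apply]
  exact sic_tors (hn i) hd (c i)

lemma piP_add (hn : ∀ i, 0 < n i) (hd' : 0 < d') (hd'd : d' ∣ d) (hd : 0 < d)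
    (x y : ∀ i, ZMod (n i)) (hx : d • x = 0) (hy : d • y = 0) :
    piP n d' d (x + y) = piP n d' d x + piP n d' d y := by
  ext i
  rw [Pi.add_apply]
  show pic (n i) d' d ((x + y) i) = pic (n i) d' d (x i) + pic (n i) d' d (y i)
  rw [Pi.add_apply]
  exact pic_add (hn i) hd' hd'd hd (x i) (y i) (tors_val hn hd hx i) (tors_val hn hd hy i)

lemma piP_zero (hn : ∀ i, 0 < n i) : piP n d' d 0 = 0 := by
  ext i
  show pic (n i) d' d ((0 : ∀ i, ZMod (n i)) i) = 0
  haveI : NeZero (n i) := ⟨(hn i).ne'⟩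
  rw [Pi.zero_apply]
  unfold pic
  rw [ZMod.val_zero, Nat.zero_div, Nat.cast_zero]

lemma piP_zero_iff (hn : ∀ i, 0 < n i) (hd' : 0 < d') (hd'd : d' ∣ d) (hd : 0 < d)
    (x : ∀ i, ZMod (n i)) (hx : d • x = 0) :
    piP n d' d x = 0 ↔ (d / d') • x = 0 := by
  constructor
  · intro h
    ext i
    rw [Pi.smul_apply, Pi.zero_apply]
    exact (pic_eq_zero_iff (hn i) hd' hd'd hd (x i) (tors_val hn hd hx i)).mp (congrFun h i)
  · intro h
    ext i
    show pic (n i) d' d (x i) = 0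
    refine (pic_eq_zero_iff (hn i) hd' hd'd hd (x i) (tors_val hn hd hx i)).mpr ?_
    have := congrFun h i
    simpa using this

lemma piP_siP (hn : ∀ i, 0 < n i) (hd' : 0 < d') (hd'd : d' ∣ d) (hd : 0 < d)
    (c : ∀ i, ZMod (upsilon (n i) d' d)) : piP n d' d (siP n d' d c) = c := by
  ext i
  exact pic_sic (hn i) hd' hd'd hd (c i)

lemma exists_le_of_le_map {α β : Type*} (f : α → β) (S : Multiset α) :
    ∀ T' : Multiset β, T' ≤ S.map f → ∃ T, T ≤ S ∧ T.map f = T' := by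
  induction S using Multiset.induction_on with
  | empty =>
    intro T' h
    rw [Multiset.map_zero, Multiset.le_zero] at h
    exact ⟨0, le_rfl, by simp [h]⟩
  | cons a s ih =>
    intro T' h
    rw [Multiset.map_cons] at h
    by_cases hm : f a ∈ T'
    · obtain ⟨T'', rfl⟩ := Multiset.exists_cons_of_mem hm
      have h2 : T'' ≤ s.map f := by
        rwa [← Multiset.cons_le_cons_iff (f a)]
      obtain ⟨T, hT, rfl⟩ := ih T'' h2
      exact ⟨a ::ₘ T, Multiset.cons_le_cons a hT, by rw [Multiset.map_cons]⟩
    · have h2 : T' ≤ s.map f := (Multiset.le_cons_of_notMem hm).mp h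
      obtain ⟨T, hT, rfl⟩ := ih T' h2
      exact ⟨T, le_trans hT (Multiset.le_cons_self _ _), rfl⟩

lemma sum_facts (hn : ∀ i, 0 < n i) (hd' : 0 < d') (hd'd : d' ∣ d) (hd : 0 < d)
    (S : Multiset (∀ i, ZMod (n i))) (hS : ∀ x ∈ S, d • x = 0) :
    d • S.sum = 0 ∧ (S.map (piP n d' d)).sum = piP n d' d S.sum := by
  induction S using Multiset.induction_on with
  | empty => simp [piP_zero hn]
  | cons a s ih =>
    have ha := hS a (Multiset.mem_cons_self a s)
    have hs : ∀ x ∈ s, d • x = 0 := fun x hx => hS x (Multiset.mem_cons_of_mem hx)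
    obtain ⟨ih1, ih2⟩ := ih hs
    constructor
    · rw [Multiset.sum_cons, smul_add, ha, ih1, add_zero]
    · rw [Multiset.map_cons, Multiset.sum_cons, Multiset.sum_cons, ih2,
        piP_add hn hd' hd'd hd a s.sum ha ih1]

lemma transfer (hn : ∀ i, 0 < n i) (hd' : 0 < d') (hd'd : d' ∣ d) (hd : 0 < d)
    (P : ℕ → Prop) (t : ℕ) :
    (∀ S : Multiset (∀ i, ZMod (n i)), (∀ g ∈ S, d • g = 0) → t ≤ Multiset.card S →
      ∃ T, T ≤ S ∧ T ≠ 0 ∧ P (Multiset.card T) ∧ (d / d') • T.sum = 0) ↔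
    (∀ S : Multiset (∀ i, ZMod (upsilon (n i) d' d)), t ≤ Multiset.card S →
      ∃ T, T ≤ S ∧ T ≠ 0 ∧ P (Multiset.card T) ∧ T.sum = 0) := by
  constructor
  · intro h S hcard
    set S' := S.map (siP n d' d) with hS'
    have htors : ∀ g ∈ S', d • g = 0 := by
      intro g hg
      rw [hS', Multiset.mem_map] at hg
      obtain ⟨c, _, rfl⟩ := hg
      exact siP_tors hn hd c
    have hcard' : t ≤ Multiset.card S' := by rwa [hS', Multiset.card_map]
    obtain ⟨T', hT'S, hT'ne, hP, hsum⟩ := h S' htors hcard'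
    obtain ⟨T, hTS, hmap⟩ := exists_le_of_le_map (siP n d' d) S T' hT'S
    have hTne : T ≠ 0 := by
      intro h0
      rw [h0, Multiset.map_zero] at hmap
      exact hT'ne hmap.symm
    have hcardT : Multiset.card T = Multiset.card T' := by rw [← hmap, Multiset.card_map]
    have htorsT' : ∀ x ∈ T', d • x = 0 := fun x hx => htors x (Multiset.mem_of_le hT'S hx)
    obtain ⟨hst, hsm⟩ := sum_facts hn hd' hd'd hd T' htorsT'
    have hback : T'.map (piP n d' d) = T := by
      rw [← hmap, Multiset.map_map]
      have : (piP n d' d ∘ siP n d' d) = id := by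
        funext c
        exact piP_siP hn hd' hd'd hd c
      rw [this, Multiset.map_id]
    have hTsum : T.sum = piP n d' d T'.sum := by rw [← hback, hsm]
    refine ⟨T, hTS, hTne, hcardT ▸ hP, ?_⟩
    rw [hTsum]
    exact (piP_zero_iff hn hd' hd'd hd T'.sum hst).mpr hsum
  · intro h S htors hcard
    set S' := S.map (piP n d' d) with hS'
    have hcard' : t ≤ Multiset.card S' := by rwa [hS', Multiset.card_map]
    obtain ⟨T', hT'S, hT'ne, hP, hsum⟩ := h S' hcard'
    obtain ⟨T, hTS, hmap⟩ := exists_le_of_le_map (piP n d' d) S T' hT'S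
    have hTne : T ≠ 0 := by
      intro h0
      rw [h0, Multiset.map_zero] at hmap
      exact hT'ne hmap.symm
    have hcardT : Multiset.card T = Multiset.card T' := by rw [← hmap, Multiset.card_map]
    have htorsT : ∀ x ∈ T, d • x = 0 := fun x hx => htors x (Multiset.mem_of_le hTS hx)
    obtain ⟨hst, hsm⟩ := sum_facts hn hd' hd'd hd T htorsT
    have hTsum : piP n d' d T.sum = 0 := by rw [← hsm, hmap, hsum]
    exact ⟨T, hTS, hTne, hcardT ▸ hP,
      (piP_zero_iff hn hd' hd'd hd T.sum hst).mp hTsum⟩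

lemma exp_eq (hr : 0 < r) (hn : ∀ i, 0 < n i) (hd' : 0 < d') (hd'd : d' ∣ d) (hd : 0 < d)
    (hdN : d ∣ n ⟨r - 1, by omega⟩) :
    AddMonoid.exponent (∀ i, ZMod (upsilon (n i) d' d)) = d' := by
  haveI inst : ∀ i, NeZero (upsilon (n i) d' d) :=
    fun i => ⟨(upsilon_pos (hn i) hd' hd'd hd).ne'⟩
  have hdvd1 : AddMonoid.exponent (∀ i, ZMod (upsilon (n i) d' d)) ∣ d' := by
    rw [AddMonoid.exponent_dvd_iff_forall_nsmul_eq_zero]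
    intro x
    ext i
    rw [Pi.smul_apply, Pi.zero_apply]
    obtain ⟨c, hc⟩ := upsilon_dvd_d' (hn i) hd' hd'd hd
    have hy : ∀ y : ZMod (upsilon (n i) d' d), upsilon (n i) d' d • y = 0 := fun y => by
      rw [nsmul_eq_mul, ZMod.natCast_self, zero_mul]
    calc d' • x i = (upsilon (n i) d' d * c) • x i := by rw [← hc]
      _ = upsilon (n i) d' d • (c • x i) := mul_smul _ _ _
      _ = 0 := hy _
  have hexp_ne : AddMonoid.exponent (∀ i, ZMod (upsilon (n i) d' d)) ≠ 0 := by
    intro h0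
    rw [h0] at hdvd1
    exact hd'.ne' (zero_dvd_iff.mp hdvd1)
  have hdvd2 : d' ∣ AddMonoid.exponent (∀ i, ZMod (upsilon (n i) d' d)) := by
    set i0 : Fin r := ⟨r - 1, by omega⟩ with hi0
    have hu : upsilon (n i0) d' d = d' := by
      rw [upsilon_eq _ _ _ (hn i0) hd' hd'd hd, Nat.gcd_eq_left hdN,
        Nat.gcd_eq_left ((Nat.div_dvd_of_dvd hd'd).trans hdN)]
      obtain ⟨m, rfl⟩ := hd'd
      have hm : 0 < m := by
        rcases Nat.eq_zero_or_pos m with h0 | h0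
        · simp [h0] at hd
        · exact h0
      rw [Nat.mul_div_cancel_left m hd']
      exact Nat.mul_div_cancel d' hm
    have h := AddMonoid.exponent_nsmul_eq_zero
      (Pi.single (M := fun i => ZMod (upsilon (n i) d' d)) i0 1)
    have h2 := congrFun h i0
    rw [Pi.smul_apply, Pi.single_eq_same, Pi.zero_apply, nsmul_eq_mul, mul_one] at h2
    have h3 := (ZMod.natCast_eq_zero_iff _ _).mp h2
    rwa [hu] at h3
  exact Nat.dvd_antisymm hdvd1 hdvd2

end PiLevel

end Stmt2Aux

theorem stmt2 (r : ℕ) (hr : 0 < r) (n : Fin r → ℕ)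
    (hn : ∀ i, 1 < n i) (hdvd : ∀ i j : Fin r, i ≤ j → n i ∣ n j)
    (d' d : ℕ) (hd' : 0 < d') (hd'd : d' ∣ d) (hdN : d ∣ n ⟨r - 1, by omega⟩) :
    davenportRel (∀ i : Fin r, ZMod (n i)) d' d =
      davenport (∀ i : Fin r, ZMod (upsilon (n i) d' d)) ∧
    etaRel (∀ i : Fin r, ZMod (n i)) d' d =
      etaConst (∀ i : Fin r, ZMod (upsilon (n i) d' d)) := by
  have hn0 : ∀ i, 0 < n i := fun i => Nat.zero_lt_of_lt (hn i)
  have hd : 0 < d := by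
    rcases Nat.eq_zero_or_pos d with h0 | h0
    · exfalso
      rw [h0] at hdN
      have h1 := zero_dvd_iff.mp hdN
      have h2 := hn ⟨r - 1, by omega⟩
      omega
    · exact h0
  constructor
  · unfold davenportRel davenport
    congr 1
    ext t
    simp only [Set.mem_setOf_eq]
    refine and_congr_right fun _ => ?_
    have h := Stmt2Aux.transfer (n := n) hn0 hd' hd'd hd (fun _ => True) t
    simpa using h
  · unfold etaRel etaConst
    rw [Stmt2Aux.exp_eq hr hn0 hd' hd'd hd hdN]
    congr 1
    ext t
    simp only [Set.mem_setOf_eq]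
    refine and_congr_right fun _ => ?_
    exact Stmt2Aux.transfer hn0 hd' hd'd hd (fun c => c ≤ d') t
end

section
/- For every integer n ≥ 1, k(C_n) ≤ α(n) ≤ (166822111/109486080)·ω(n). -/
open scoped BigOperators

attribute [local instance] Classical.propDecidable

namespace Aux

lemma le_of_le_cons_of_not_mem {t u : Multiset α} {b : α} (h : t ≤ b ::ₘ u) (hb : b ∉ t) :
    t ≤ u := by
  classical
  rw [Multiset.le_iff_count] at h ⊢
  intro a
  have := h a
  by_cases hab : a = b
  · subst hab; simpa [Multiset.count_eq_zero_of_notMem hb] using Nat.zero_le _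
  · simpa [Multiset.count_cons_of_ne hab] using this

lemma exists_map_eq_of_le_map {f : α → β} :
    ∀ {s : Multiset α} {t : Multiset β}, t ≤ s.map f → ∃ u, u ≤ s ∧ u.map f = t := by
  classical
  intro s
  induction s using Multiset.induction with
  | empty => intro t ht; simp at ht; exact ⟨0, le_refl _, by simp [ht]⟩
  | cons a s ih =>
    intro t ht
    rw [Multiset.map_cons] at ht
    by_cases hfa : f a ∈ t
    · have h1 : t.erase (f a) ≤ s.map f := by
        have := Multiset.erase_le_erase (f a) ht
        simpa using this
      obtain ⟨u, hu, hu2⟩ := ih h1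
      refine ⟨a ::ₘ u, Multiset.cons_le_cons _ hu, ?_⟩
      rw [Multiset.map_cons, hu2, Multiset.cons_erase hfa]
    · obtain ⟨u, hu, hu2⟩ := ih (le_of_le_cons_of_not_mem ht hfa)
      exact ⟨u, le_trans hu (Multiset.le_cons_self _ _), hu2⟩

lemma split_le_add {Z A B : Multiset α} (h : Z ≤ A + B) :
    ∃ Z₀ Z₁, Z₀ ≤ A ∧ Z₁ ≤ B ∧ Z = Z₀ + Z₁ := by
  classical
  refine ⟨Z ∩ A, Z - A, Multiset.inter_le_right, ?_, ?_⟩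
  · rw [Multiset.sub_le_iff_le_add]
    simpa [add_comm] using h
  · ext a
    simp only [Multiset.count_add, Multiset.count_inter, Multiset.count_sub]
    omega

lemma mem_le_sum {U : Multiset (Multiset α)} {u : Multiset α} (h : u ∈ U) : u ≤ U.sum := by
  classical
  have : U = u ::ₘ U.erase u := (Multiset.cons_erase h).symm
  rw [this, Multiset.sum_cons]
  exact Multiset.le_add_right _ _

lemma sum_mono_of_le {U V : Multiset (Multiset α)} (h : V ≤ U) : V.sum ≤ U.sum := by
  obtain ⟨D, rfl⟩ := Multiset.le_iff_exists_add.mp h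
  rw [Multiset.sum_add]
  exact Multiset.le_add_right _ _



lemma extract_one {n p : ℕ} (hp : p.Prime) (hdvd : p ∣ n) (F : Multiset (ZMod n))
    (hF : p ≤ Multiset.card F) :
    ∃ U, U ≤ F ∧ U ≠ 0 ∧ Multiset.card U ≤ p ∧
      (ZMod.castHom hdvd (ZMod p)) U.sum = 0 := by
  classical
  haveI : NeZero p := ⟨hp.ne_zero⟩
  set l := F.toList with hl
  have hlen : l.length = Multiset.card F := by
    rw [hl, ← Multiset.coe_card, Multiset.coe_toList]
  set φ := ZMod.castHom hdvd (ZMod p) with hφ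
  have hcard : Fintype.card (ZMod p) < Fintype.card (Fin (p+1)) := by
    rw [ZMod.card, Fintype.card_fin]; omega
  obtain ⟨x, y, hxy, hfxy⟩ := Fintype.exists_ne_map_eq_of_card_lt
    (fun i : Fin (p+1) => φ ((l.take i.1).sum)) hcard
  wlog hlt : x.1 < y.1 generalizing x y
  · exact this y x hxy.symm hfxy.symm (by have h : x.1 ≠ y.1 := fun h => hxy (Fin.ext h); omega)
  · set L : List (ZMod n) := (l.take y.1).drop x.1 with hL
    have hy : y.1 ≤ l.length := by have := y.2; omega
    have hsub : L.Sublist l := ((l.take y.1).drop_sublist x.1).trans (l.take_sublist y.1)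
    have hLlen : L.length = y.1 - x.1 := by
      rw [hL, List.length_drop, List.length_take, min_eq_left hy]
    have htx : l.take x.1 = (l.take y.1).take x.1 := by
      rw [List.take_take, min_eq_left (le_of_lt hlt)]
    have htake : l.take x.1 ++ L = l.take y.1 := by
      rw [htx, hL, List.take_append_drop]
    refine ⟨(L : Multiset (ZMod n)), ?_, ?_, ?_, ?_⟩
    · rw [← Multiset.coe_toList F]
      exact Multiset.coe_le.mpr hsub.subperm
    · intro h0
      have h1 := congrArg Multiset.card h0
      rw [Multiset.coe_card, hLlen] at h1
      simp at h1
      omega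
    · rw [Multiset.coe_card, hLlen]; have := y.2; omega
    · have hsum : (l.take x.1).sum + L.sum = (l.take y.1).sum := by
        rw [← List.sum_append, htake]
      have h2 : φ ((l.take x.1).sum) + φ L.sum = φ ((l.take y.1).sum) := by
        rw [← map_add, hsum]
      rw [← hfxy] at h2
      rw [Multiset.sum_coe]
      have := add_left_cancel (a := φ ((l.take x.1).sum)) (b := φ L.sum) (c := 0) (by simpa using h2)
      exact this

lemma decomp {n p : ℕ} (hp : p.Prime) (hdvd : p ∣ n) :
    ∀ (k : ℕ) (M : Multiset (ZMod n)), Multiset.card M ≤ k →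
    ∃ (Us : Multiset (Multiset (ZMod n))) (L : Multiset (ZMod n)),
      M = Us.sum + L ∧
      (∀ U ∈ Us, U ≠ 0 ∧ Multiset.card U ≤ p ∧ (ZMod.castHom hdvd (ZMod p)) U.sum = 0 ∧
        ∃ d, ∀ g ∈ U, addOrderOf g = d) ∧
      (∀ d, Multiset.card (L.filter (fun g => addOrderOf g = d)) < p) := by
  classical
  intro k
  induction k with
  | zero =>
    intro M hM
    have : M = 0 := by
      rw [← Multiset.card_eq_zero]; omega
    subst this
    exact ⟨0, 0, by simp, by simp, fun d => by simpa using hp.pos⟩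
  | succ k ih =>
    intro M hM
    by_cases hex : ∃ d, p ≤ Multiset.card (M.filter (fun g => addOrderOf g = d))
    · obtain ⟨d, hd⟩ := hex
      obtain ⟨U, hUF, hU0, hUcard, hUsum⟩ := extract_one hp hdvd _ hd
      have hUM : U ≤ M := hUF.trans (Multiset.filter_le _ _)
      have hUord : ∀ g ∈ U, addOrderOf g = d := by
        intro g hg
        have := Multiset.mem_of_le hUF hg
        exact (Multiset.mem_filter.mp this).2
      have hUpos : 0 < Multiset.card U := by
        rwa [Multiset.card_pos]
      have hcard : Multiset.card (M - U) ≤ k := by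
        rw [Multiset.card_sub hUM]; omega
      obtain ⟨Us, L, hML, hGood, hLcount⟩ := ih (M - U) hcard
      refine ⟨U ::ₘ Us, L, ?_, ?_, hLcount⟩
      · rw [Multiset.sum_cons]
        have : M - U + U = M := tsub_add_cancel_of_le hUM
        rw [← this, hML]
        rw [add_comm (Us.sum + L) U, ← add_assoc]
      · intro V hV
        rcases Multiset.mem_cons.mp hV with h | h
        · subst h; exact ⟨hU0, hUcard, hUsum, d, hUord⟩
        · exact hGood V h
    · push_neg at hex
      exact ⟨0, M, by simp, by simp, hex⟩



/-- The embedding `ZMod m →+ ZMod n` sending `1` to `p`, when `n = p * m`. -/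
noncomputable def iota (p m n : ℕ) (h : (p : ZMod n) * (m : ZMod n) = 0) : ZMod m →+ ZMod n :=
  ZMod.lift m ⟨AddMonoidHom.mk' (fun t : ℤ => (p : ZMod n) * (t : ZMod n))
    (fun a b => by push_cast; ring), by simpa using h⟩

lemma iota_natCast {p m n : ℕ} (h : (p : ZMod n) * (m : ZMod n) = 0) (t : ℕ) :
    iota p m n h (t : ZMod m) = ((p * t : ℕ) : ZMod n) := by
  have : ((t : ℕ) : ZMod m) = ((t : ℤ) : ZMod m) := by push_cast; ring
  rw [iota, this, ZMod.lift_coe, AddMonoidHom.mk'_apply]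
  push_cast
  ring

lemma iota_injective {p m n : ℕ} (hn : n = p * m) (hp : 0 < p) (hm : 0 < m)
    (h : (p : ZMod n) * (m : ZMod n) = 0) : Function.Injective (iota p m n h) := by
  haveI : NeZero m := ⟨by omega⟩
  haveI : NeZero n := ⟨by rw [hn]; positivity⟩
  rw [injective_iff_map_eq_zero]
  intro x hx
  have hxv : ((x.val : ℕ) : ZMod m) = x := ZMod.natCast_rightInverse x
  rw [← hxv, iota_natCast] at hx
  rw [ZMod.natCast_eq_zero_iff, hn] at hx
  have : m ∣ x.val := (Nat.mul_dvd_mul_iff_left hp).mp hx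
  have hlt : x.val < m := ZMod.val_lt x
  rw [← hxv, Nat.eq_zero_of_dvd_of_lt this hlt]
  simp



lemma sum_sum {α : Type*} [AddCommMonoid α] (Vs : Multiset (Multiset α)) :
    (Vs.sum : Multiset α).sum = (Vs.map Multiset.sum).sum := by
  induction Vs using Multiset.induction with
  | empty => simp
  | cons V Vs ih => simp [Multiset.sum_cons, ih]

lemma map_msum {α β : Type*} (f : α → β) (Vs : Multiset (Multiset α)) :
    (Vs.sum : Multiset α).map f = (Vs.map (Multiset.map f)).sum := by
  induction Vs using Multiset.induction with
  | empty => simp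
  | cons V Vs ih => simp [Multiset.sum_cons, ih]

lemma fiber_sum_le {α : Type*} (key : α → ℕ) (F : ℕ → ℝ) (B : ℕ) :
    ∀ (D : Finset ℕ) (L : Multiset α), (∀ g ∈ L, key g ∈ D) → (∀ d ∈ D, 0 ≤ F d) →
    (∀ d, Multiset.card (L.filter (fun g => key g = d)) ≤ B) →
    (L.map (fun g => F (key g))).sum ≤ ∑ d ∈ D, (B : ℝ) * F d := by
  classical
  intro D
  induction D using Finset.induction with
  | empty =>
    intro L hmem _ _
    have : L = 0 := Multiset.eq_zero_of_forall_notMem (fun a ha => by simpa using hmem a ha)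
    simp [this]
  | insert d D' hd ih =>
    intro L hmem hF hcount
    have hsplit := Multiset.filter_add_not (fun g => key g = d) L
    set L₁ := L.filter (fun g => key g = d) with hL₁
    set L₂ := L.filter (fun g => ¬ key g = d) with hL₂
    have h1 : (L₁.map (fun g => F (key g))).sum = (Multiset.card L₁ : ℝ) * F d := by
      have : L₁.map (fun g => F (key g)) = L₁.map (fun _ => F d) := by
        apply Multiset.map_congr rfl
        intro x hx
        rw [(Multiset.mem_filter.mp hx).2]
      rw [this]
      rw [Multiset.map_const', Multiset.sum_replicate, nsmul_eq_mul]
    have h2 : (L₂.map (fun g => F (key g))).sum ≤ ∑ e ∈ D', (B : ℝ) * F e := by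
      apply ih L₂
      · intro g hg
        have hgL : g ∈ L := Multiset.mem_of_le (Multiset.filter_le _ _) hg
        have := hmem g hgL
        rcases Finset.mem_insert.mp this with h | h
        · exact absurd h (Multiset.mem_filter.mp hg).2
        · exact h
      · intro e he; exact hF e (Finset.mem_insert_of_mem he)
      · intro e
        refine le_trans (Multiset.card_le_card (Multiset.filter_le_filter _ (Multiset.filter_le _ _))) (hcount e)
    have hcard : (Multiset.card L₁ : ℝ) * F d ≤ (B : ℝ) * F d := by
      apply mul_le_mul_of_nonneg_right _ (hF d (Finset.mem_insert_self _ _))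
      exact_mod_cast hcount d
    calc (L.map (fun g => F (key g))).sum
        = (L₁.map (fun g => F (key g))).sum + (L₂.map (fun g => F (key g))).sum := by
          rw [← Multiset.sum_add, ← Multiset.map_add, hsplit]
      _ ≤ (B : ℝ) * F d + ∑ e ∈ D', (B : ℝ) * F e := by
          rw [h1]; exact add_le_add hcard h2
      _ = ∑ e ∈ insert d D', (B : ℝ) * F e := by rw [Finset.sum_insert hd]

lemma dvd_div_p {n p c k : ℕ} (hpp : p.Prime) (hc : c ∣ n) (hpc : ¬ p ∣ c)
    (hk1 : k ∣ n / c) (hk2 : k ∣ n / p) (hpn : p ∣ n) : k ∣ (n / c) / p := by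
  have h1 : k * c ∣ n := by
    rw [mul_comm]; exact (Nat.dvd_div_iff_mul_dvd hc).mp hk1
  have h2 : k * p ∣ n := by
    rw [mul_comm]; exact (Nat.dvd_div_iff_mul_dvd hpn).mp hk2
  have hlcm : Nat.lcm (k * c) (k * p) ∣ n := Nat.lcm_dvd h1 h2
  rw [Nat.lcm_mul_left] at hlcm
  have hccp : Nat.lcm c p = c * p :=
    Nat.Coprime.lcm_eq_mul (((Nat.Prime.coprime_iff_not_dvd hpp).mpr hpc).symm)
  rw [hccp] at hlcm
  rw [Nat.div_div_eq_div_mul]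
  rw [Nat.dvd_div_iff_mul_dvd (dvd_trans (dvd_mul_left (c*p) k) hlcm), mul_comm]
  exact hlcm



lemma alpha_nonneg (n : ℕ) : 0 ≤ alphaFn n := by
  apply Finset.sum_nonneg
  intro d hd
  have hd1 : 1 ≤ d := Nat.pos_of_mem_divisors hd
  have h1 : (1 : ℝ) ≤ d.minFac := by exact_mod_cast Nat.minFac_pos d
  have : (0:ℝ) < d := by exact_mod_cast hd1
  apply div_nonneg (by linarith) (le_of_lt this)

lemma minFac_eq_of_not_dvd {n d : ℕ} (h2 : 2 ≤ n) (hdn : d ∣ n) (hdm : ¬ d ∣ n / n.minFac) :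
    d.minFac = n.minFac := by
  set p := n.minFac with hp
  have hpp : p.Prime := Nat.minFac_prime (by omega)
  have hpn : p ∣ n := Nat.minFac_dvd n
  have hnm : n = p * (n / p) := (Nat.mul_div_cancel' hpn).symm
  have hpd : p ∣ d := by
    by_contra hnd
    apply hdm
    have hcop : Nat.Coprime d p := ((Nat.Prime.coprime_iff_not_dvd hpp).mpr hnd).symm
    exact Nat.Coprime.dvd_of_dvd_mul_left hcop (by rwa [← hnm])
  have hd0 : 0 < d := Nat.pos_of_dvd_of_pos hdn (by omega)
  have hd2 : 2 ≤ d := le_trans hpp.two_le (Nat.le_of_dvd hd0 hpd)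
  apply le_antisymm
  · exact Nat.minFac_le_of_dvd hpp.two_le hpd
  · exact Nat.minFac_le_of_dvd (Nat.minFac_prime (by omega : d ≠ 1)).two_le
      ((Nat.minFac_dvd d).trans hdn)

lemma alpha_split {n : ℕ} (h2 : 2 ≤ n) :
    alphaFn n = alphaFn (n / n.minFac) +
      ∑ d ∈ n.divisors \ (n / n.minFac).divisors, ((n.minFac : ℝ) - 1) / d := by
  classical
  have hsub : (n / n.minFac).divisors ⊆ n.divisors :=
    Nat.divisors_subset_of_dvd (by omega) (Nat.div_dvd_of_dvd (Nat.minFac_dvd n))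
  rw [alphaFn, ← Finset.sum_sdiff hsub, add_comm]
  congr 1
  apply Finset.sum_congr rfl
  intro d hd
  have hdn : d ∣ n := Nat.dvd_of_mem_divisors (Finset.mem_sdiff.mp hd).1
  have hdm : ¬ d ∣ n / n.minFac := by
    intro hc
    have hm0 : n / n.minFac ≠ 0 := by
      have := Nat.minFac_le (by omega : 0 < n)
      have h := Nat.div_pos (Nat.minFac_le (by omega)) (Nat.minFac_pos n)
      omega
    exact (Finset.mem_sdiff.mp hd).2 (Nat.mem_divisors.mpr ⟨hc, hm0⟩)
  rw [minFac_eq_of_not_dvd h2 hdn hdm]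

/-- if `d ∣ n` and `p ∤ n / d` then `¬ d ∣ n / p`  -/
lemma not_dvd_div {n p d : ℕ} (hn : 0 < n) (hp : 0 < p) (hpn : p ∣ n) (hd : d ∣ n)
    (hnd : ¬ p ∣ n / d) : ¬ d ∣ n / p := by
  intro hc
  apply hnd
  obtain ⟨t, ht⟩ := hc
  have hd0 : 0 < d := Nat.pos_of_dvd_of_pos hd hn
  have hn' : n = d * (p * t) := by
    have := Nat.mul_div_cancel' hpn
    calc n = p * (n / p) := this.symm
    _ = p * (d * t) := by rw [← ht]
    _ = d * (p * t) := by ring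
  rw [hn', Nat.mul_div_cancel_left _ hd0]
  exact Dvd.intro t rfl

set_option maxHeartbeats 1000000 in
lemma key (n : ℕ) : 1 ≤ n → ∀ S : Multiset (ZMod n), IsZeroSumFree S → crossNumber S ≤ alphaFn n := by
  induction n using Nat.strong_induction_on with
  | _ n ih =>
  intro hn S hS
  haveI : NeZero n := ⟨by omega⟩
  by_cases h1 : n = 1
  · subst h1
    have hS0 : S = 0 := by
      by_contra h
      obtain ⟨a, ha⟩ := Multiset.exists_mem_of_ne_zero h
      exact hS {a} (Multiset.singleton_le.mpr ha) (by simp)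
        (by simp [Subsingleton.elim a 0])
    rw [hS0]
    have : crossNumber (0 : Multiset (ZMod 1)) = 0 := by simp [crossNumber]
    rw [this]
    exact alpha_nonneg 1
  have h2 : 2 ≤ n := by omega
  set p := n.minFac with hpdef
  have hpp : p.Prime := Nat.minFac_prime h1
  have hpn : p ∣ n := Nat.minFac_dvd n
  set m := n / p with hmdef
  have hnm : n = p * m := (Nat.mul_div_cancel' hpn).symm
  have hm1 : 1 ≤ m := Nat.div_pos (Nat.minFac_le (by omega)) (Nat.minFac_pos n)
  have hmn : m < n := by
    have hp2 := hpp.two_le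
    nlinarith
  haveI : NeZero m := ⟨by omega⟩
  set φ := ZMod.castHom hpn (ZMod p) with hφdef
  -- basic order facts
  have hord : ∀ g : ZMod n, addOrderOf g = n / Nat.gcd n g.val := by
    intro g
    conv_lhs => rw [← ZMod.natCast_rightInverse g]
    exact ZMod.addOrderOf_coe g.val (by omega)
  have hφval : ∀ g : ZMod n, (φ g = 0 ↔ p ∣ g.val) := by
    intro g
    conv_lhs => rw [← ZMod.natCast_rightInverse g]
    rw [hφdef, map_natCast]
    exact ZMod.natCast_eq_zero_iff _ _
  have hordvd : ∀ g : ZMod n, addOrderOf g ∣ n := by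
    intro g
    rw [hord g]
    exact Nat.div_dvd_of_dvd (Nat.gcd_dvd_left n g.val)
  -- splitting S
  set S₀ := S.filter (fun g => φ g = 0) with hS₀def
  set S₁ := S.filter (fun g => ¬ φ g = 0) with hS₁def
  have hsplit : S₀ + S₁ = S := Multiset.filter_add_not _ S
  have hS₁mem : ∀ g ∈ S₁, ¬ p ∣ Nat.gcd n g.val := by
    intro g hg hdvd
    have : p ∣ g.val := hdvd.trans (Nat.gcd_dvd_right n g.val)
    exact (Multiset.mem_filter.mp hg).2 ((hφval g).mpr this)
  obtain ⟨Us, L, hUL, hGood, hLcount⟩ := decomp hpp hpn (Multiset.card S₁) S₁ le_rfl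
  -- iota setup
  have hiotaeq : (p : ZMod n) * (m : ZMod n) = 0 := by
    rw [← Nat.cast_mul, ← hnm, ZMod.natCast_self]
  set ι := iota p m n hiotaeq with hιdef
  have hιinj : Function.Injective ι := iota_injective hnm hpp.pos (by omega) _
  set lft : ZMod n → ZMod m := fun g => ((g.val / p : ℕ) : ZMod m) with hlftdef
  have hsec : ∀ g : ZMod n, φ g = 0 → ι (lft g) = g := by
    intro g hg
    have hval : p ∣ g.val := (hφval g).mp hg
    show iota p m n hiotaeq ((g.val / p : ℕ) : ZMod m) = g
    rw [iota_natCast, Nat.mul_div_cancel' hval]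
    exact ZMod.natCast_rightInverse g
  -- per-block bound
  have hUsS₁ : Us.sum ≤ S₁ := by rw [hUL]; exact Multiset.le_add_right _ _
  have hblock : ∀ U ∈ Us, crossNumber U ≤ 1 / (addOrderOf (U.sum) : ℝ) := by
    intro U hU
    obtain ⟨hU0, hUcard, hUsum, d, hUord⟩ := hGood U hU
    obtain ⟨g₀, hg₀⟩ := Multiset.exists_mem_of_ne_zero hU0
    have hUle : U ≤ S₁ := (mem_le_sum hU).trans hUsS₁
    have hg₀S₁ : g₀ ∈ S₁ := Multiset.mem_of_le hUle hg₀
    set c := Nat.gcd n g₀.val with hcdef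
    have hcn : c ∣ n := Nat.gcd_dvd_left n g₀.val
    have hpc : ¬ p ∣ c := hS₁mem g₀ hg₀S₁
    have hdeq : d = n / c := by rw [← hUord g₀ hg₀, hord g₀]
    set k := addOrderOf U.sum with hkdef
    have hk1 : k ∣ d := by
      rw [hkdef]
      apply addOrderOf_dvd_iff_nsmul_eq_zero.mpr
      rw [Multiset.smul_sum]
      apply Multiset.sum_eq_zero
      intro x hx
      obtain ⟨g, hg, rfl⟩ := Multiset.mem_map.mp hx
      rw [← hUord g hg]
      exact addOrderOf_nsmul_eq_zero g
    have hk2 : k ∣ m := by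
      rw [hkdef]
      apply addOrderOf_dvd_iff_nsmul_eq_zero.mpr
      rw [← hsec U.sum hUsum, ← map_nsmul]
      have : m • (lft U.sum) = 0 := by
        have : (m : ZMod m) = 0 := ZMod.natCast_self m
        rw [nsmul_eq_mul, this, zero_mul]
      rw [this, map_zero]
    have hkd : k ∣ d / p := by
      rw [hdeq]
      exact dvd_div_p hpp hcn hpc (hdeq ▸ hk1) hk2 hpn
    have hd0 : 0 < d := by
      rw [← hUord g₀ hg₀]; exact addOrderOf_pos g₀
    have hpd : p ∣ d := by
      have hcd : n = c * d := by
        rw [hdeq]; exact (Nat.mul_div_cancel' hcn).symm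
      have : p ∣ c * d := hcd ▸ hpn
      exact (hpp.dvd_mul.mp this).resolve_left hpc
    have hdp0 : 0 < d / p := Nat.div_pos (Nat.le_of_dvd hd0 hpd) hpp.pos
    have hkle : k * p ≤ d := by
      have h1 : k ≤ d / p := Nat.le_of_dvd hdp0 hkd
      calc k * p ≤ (d / p) * p := Nat.mul_le_mul_right p h1
        _ = d := Nat.div_mul_cancel hpd
    have hk0 : 0 < k := addOrderOf_pos U.sum
    have hcrossU : crossNumber U = (Multiset.card U : ℝ) * (1 / (d:ℝ)) := by
      rw [crossNumber]
      have : U.map (fun g => (1:ℝ) / (addOrderOf g : ℝ)) = U.map (fun _ => 1 / (d:ℝ)) :=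
        Multiset.map_congr rfl (fun g hg => by rw [hUord g hg])
      rw [this, Multiset.map_const', Multiset.sum_replicate, nsmul_eq_mul]
    rw [hcrossU]
    have hdR : (0:ℝ) < d := by exact_mod_cast hd0
    have hkR : (0:ℝ) < k := by exact_mod_cast hk0
    have h₁ : (Multiset.card U : ℝ) * (1 / (d:ℝ)) ≤ (p : ℝ) / d := by
      rw [mul_one_div]
      exact (div_le_div_iff_of_pos_right hdR).mpr (by exact_mod_cast hUcard)
    have h₂ : (p:ℝ)/(d:ℝ) ≤ 1/(k:ℝ) := by
      rw [div_le_div_iff₀ hdR hkR, one_mul]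
      have hkle' : ((k * p : ℕ) : ℝ) ≤ ((d : ℕ) : ℝ) := by exact_mod_cast hkle
      push_cast at hkle'
      nlinarith [hkle']
    exact le_trans h₁ h₂
  -- the lifted sequence
  set W := S₀ + Us.map Multiset.sum with hWdef
  have hWker : ∀ w ∈ W, φ w = 0 := by
    intro w hw
    rcases Multiset.mem_add.mp hw with h | h
    · exact (Multiset.mem_filter.mp h).2
    · obtain ⟨U, hU, rfl⟩ := Multiset.mem_map.mp h
      exact (hGood U hU).2.2.1
  set S' := W.map lft with hS'def
  have hmapback : S'.map ι = W := by
    rw [hS'def, Multiset.map_map]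
    calc Multiset.map (⇑ι ∘ lft) W = Multiset.map id W :=
        Multiset.map_congr rfl (fun w hw => hsec w (hWker w hw))
      _ = W := Multiset.map_id W
  have hS'zsf : IsZeroSumFree S' := by
    intro T hT hT0 hTsum
    have hZle : T.map ι ≤ S₀ + Us.map Multiset.sum := by
      rw [← hWdef, ← hmapback]; exact Multiset.map_le_map hT
    obtain ⟨Z₀, Z₁, hZ₀, hZ₁, hZsplit⟩ := split_le_add hZle
    obtain ⟨Vs, hVs, hVsmap⟩ := exists_map_eq_of_le_map hZ₁
    have hSZle : Z₀ + Vs.sum ≤ S := by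
      rw [← hsplit, hUL]
      exact add_le_add hZ₀ (le_trans (sum_mono_of_le hVs) (Multiset.le_add_right _ _))
    have hSZsum : (Z₀ + Vs.sum).sum = 0 := by
      rw [Multiset.sum_add, sum_sum, hVsmap]
      have h3 : Z₀.sum + Z₁.sum = (T.map ι).sum := by rw [← Multiset.sum_add, ← hZsplit]
      rw [h3, ← map_multiset_sum, hTsum, map_zero]
    have hSZ0 : Z₀ + Vs.sum ≠ 0 := by
      intro hzero
      have hc := congrArg Multiset.card hzero
      rw [Multiset.card_add] at hc
      simp only [Multiset.card_zero] at hc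
      have hZ₀0 : Z₀ = 0 := by
        rw [← Multiset.card_eq_zero]; omega
      have hVs0 : Vs.sum = 0 := by
        rw [← Multiset.card_eq_zero]; omega
      have hVsnil : Vs = 0 := by
        by_contra hne
        obtain ⟨V, hV⟩ := Multiset.exists_mem_of_ne_zero hne
        have : V ≤ Vs.sum := mem_le_sum hV
        rw [hVs0] at this
        have hV0 : V = 0 := le_bot_iff.mp this
        exact ((hGood V (Multiset.mem_of_le hVs hV)).1) hV0
      have : T.map ι = 0 := by
        rw [hZsplit, hZ₀0, ← hVsmap, hVsnil]
        simp
      rw [Multiset.map_eq_zero] at this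
      exact hT0 this
    exact hS _ hSZle hSZ0 hSZsum
  have hIH : crossNumber S' ≤ alphaFn m := ih m hmn hm1 S' hS'zsf
  -- rewriting crossNumber S'
  have hordlft : ∀ w ∈ W, addOrderOf (lft w) = addOrderOf w := by
    intro w hw
    calc addOrderOf (lft w) = addOrderOf (ι (lft w)) := (addOrderOf_injective ι hιinj _).symm
      _ = addOrderOf w := by rw [hsec w (hWker w hw)]
  have hcrossS' : crossNumber S' = (W.map (fun w => (1:ℝ)/(addOrderOf w : ℝ))).sum := by
    rw [crossNumber, hS'def, Multiset.map_map]
    congr 1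
    exact Multiset.map_congr rfl (fun w hw => by
      show (1:ℝ)/(addOrderOf (lft w) : ℝ) = _
      rw [hordlft w hw])
  -- leftover bound
  set D : Finset ℕ := n.divisors \ m.divisors with hDdef
  have hLS₁ : L ≤ S₁ := by rw [hUL]; exact Multiset.le_add_left _ _
  have hLbound : crossNumber L ≤ ∑ d ∈ D, ((p - 1 : ℕ) : ℝ) * (1/(d:ℝ)) := by
    rw [crossNumber]
    apply fiber_sum_le addOrderOf (fun d => (1:ℝ)/(d:ℝ)) (p-1) D L
    · intro g hg
      have hgS₁ : g ∈ S₁ := Multiset.mem_of_le hLS₁ hg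
      rw [hDdef, Finset.mem_sdiff]
      constructor
      · exact Nat.mem_divisors.mpr ⟨hordvd g, by omega⟩
      · intro hmem
        have hdm : addOrderOf g ∣ m := Nat.dvd_of_mem_divisors hmem
        have hnd : ¬ p ∣ n / addOrderOf g := by
          rw [hord g, Nat.div_div_self (Nat.gcd_dvd_left n g.val) (by omega : n ≠ 0)]
          exact hS₁mem g hgS₁
        exact not_dvd_div (by omega) hpp.pos hpn (hordvd g) hnd hdm
    · intro d hd
      positivity
    · intro d
      have := hLcount d
      omega
  -- putting it together
  have hcrossW : crossNumber S₀ + ((Us.map Multiset.sum).map (fun w => (1:ℝ)/(addOrderOf w : ℝ))).sum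
      = crossNumber S' := by
    rw [hcrossS', hWdef, Multiset.map_add, Multiset.sum_add, crossNumber]
  have hUsum_le : crossNumber Us.sum ≤ ((Us.map Multiset.sum).map (fun w => (1:ℝ)/(addOrderOf w : ℝ))).sum := by
    have e1 : crossNumber Us.sum = (Us.map crossNumber).sum := by
      rw [crossNumber, map_msum, sum_sum, Multiset.map_map]
      rfl
    rw [e1, Multiset.map_map]
    exact Multiset.sum_map_le_sum_map _ _ hblock
  have hcrossS : crossNumber S = crossNumber S₀ + crossNumber Us.sum + crossNumber L := by
    rw [← hsplit, hUL]
    simp only [crossNumber, Multiset.map_add, Multiset.sum_add]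
    ring
  have hDsum : ∑ d ∈ D, ((p - 1 : ℕ) : ℝ) * (1/(d:ℝ)) = ∑ d ∈ D, ((p:ℝ) - 1) / d := by
    apply Finset.sum_congr rfl
    intro d hd
    rw [mul_one_div]
    congr 1
    have : (1:ℕ) ≤ p := hpp.one_lt.le
    push_cast [Nat.cast_sub this]
    ring
  have halpha : alphaFn n = alphaFn m + ∑ d ∈ D, ((p:ℝ) - 1) / d := by
    rw [alpha_split h2]
  calc crossNumber S = crossNumber S₀ + crossNumber Us.sum + crossNumber L := hcrossS
    _ ≤ crossNumber S₀ + ((Us.map Multiset.sum).map (fun w => (1:ℝ)/(addOrderOf w : ℝ))).sum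
        + crossNumber L := by
        have := add_le_add (add_le_add (le_refl (crossNumber S₀)) hUsum_le) (le_refl (crossNumber L))
        exact this
    _ = crossNumber S' + crossNumber L := by rw [hcrossW]
    _ ≤ alphaFn m + ∑ d ∈ D, ((p - 1 : ℕ) : ℝ) * (1/(d:ℝ)) := add_le_add hIH hLbound
    _ = alphaFn n := by rw [hDsum, ← halpha]



lemma geom_le {q : ℕ} (hq : 2 ≤ q) (B : ℕ) :
    ∑ j ∈ Finset.range (B+1), ((1:ℝ)/q)^j ≤ (q:ℝ)/((q:ℝ)-1) := by
  have hq1 : (1:ℝ) < q := by exact_mod_cast hq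
  have hr0 : (0:ℝ) < 1/q := by positivity
  have hr1 : (1:ℝ)/q < 1 := by
    rw [div_lt_one (by positivity)]; exact hq1
  have hsum := geom_sum_eq (x := (1:ℝ)/q) (by linarith) (B+1)
  have hpow : (0:ℝ) ≤ ((1:ℝ)/q)^(B+1) := by positivity
  have hple : ((1:ℝ)/q)^(B+1) ≤ 1 := pow_le_one₀ (le_of_lt hr0) (le_of_lt hr1)
  have hne1 : (1:ℝ)/q - 1 ≠ 0 := by linarith
  have hne2 : 1 - (1:ℝ)/q ≠ 0 := by linarith
  have heq2 : (((1:ℝ)/q)^(B+1) - 1)/(((1:ℝ)/q) - 1) = (1 - ((1:ℝ)/q)^(B+1))/(1 - ((1:ℝ)/q)) := by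
    rw [div_eq_div_iff hne1 hne2]; ring
  rw [hsum, heq2, div_le_div_iff₀ (by linarith) (by linarith)]
  have hq' : (q:ℝ) ≠ 0 := by linarith
  have h3 : (q:ℝ) * (1 - 1/q) = (q:ℝ) - 1 := by field_simp
  rw [h3]
  nlinarith [hpow, hq1]

lemma prod_bound (B : ℕ) : ∀ (Q : Finset ℕ), (∀ q ∈ Q, Nat.Prime q) → ∀ (D : Finset ℕ),
    (∀ d ∈ D, d ≠ 0 ∧ d.primeFactors ⊆ Q ∧ ∀ r, d.factorization r ≤ B) →
    ∑ d ∈ D, (1:ℝ)/d ≤ ∏ q ∈ Q, ∑ j ∈ Finset.range (B+1), ((1:ℝ)/q)^j := by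
  classical
  intro Q
  induction Q using Finset.induction with
  | empty =>
    intro _ D hD
    have : D ⊆ {1} := by
      intro d hd
      obtain ⟨hd0, hpf, _⟩ := hD d hd
      have : d.primeFactors = ∅ := Finset.subset_empty.mp hpf
      rcases Nat.primeFactors_eq_empty.mp this with h | h
      · exact absurd h hd0
      · simp [h]
    rcases Finset.subset_singleton_iff.mp this with h | h <;> simp [h]
  | insert q Q' hqQ ih =>
    intro hQ D hD
    have hq : q.Prime := hQ q (Finset.mem_insert_self _ _)
    have hQ' : ∀ r ∈ Q', Nat.Prime r := fun r hr => hQ r (Finset.mem_insert_of_mem hr)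
    have hmaps : ∀ d ∈ D, d.factorization q ∈ Finset.range (B+1) := by
      intro d hd
      exact Finset.mem_range.mpr (Nat.lt_succ_of_le ((hD d hd).2.2 q))
    rw [← Finset.sum_fiberwise_of_maps_to hmaps (fun d => (1:ℝ)/d)]
    have hstep : ∀ j ∈ Finset.range (B+1),
        ∑ d ∈ D.filter (fun d => d.factorization q = j), (1:ℝ)/d
          ≤ ((1:ℝ)/q)^j * ∏ r ∈ Q', ∑ i ∈ Finset.range (B+1), ((1:ℝ)/r)^i := by
      intro j _
      set Dj := D.filter (fun d => d.factorization q = j) with hDj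
      have hdvd : ∀ d ∈ Dj, q^j ∣ d := by
        intro d hd
        have := Nat.ordProj_dvd d q
        rwa [(Finset.mem_filter.mp hd).2] at this
      have hd0 : ∀ d ∈ Dj, d ≠ 0 := fun d hd => (hD d (Finset.mem_filter.mp hd).1).1
      have hq0 : ∀ d ∈ Dj, d / q^j ≠ 0 := by
        intro d hd h
        have heq : q^j * (d / q^j) = d := Nat.mul_div_cancel' (hdvd d hd)
        rw [h, Nat.mul_zero] at heq
        exact hd0 d hd heq.symm
      have hinj : ∀ x ∈ Dj, ∀ y ∈ Dj, x / q^j = y / q^j → x = y := by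
        intro x hx y hy hxy
        have hx' := Nat.div_mul_cancel (hdvd x hx)
        have hy' := Nat.div_mul_cancel (hdvd y hy)
        rw [← hx', ← hy', hxy]
      set E := Dj.image (fun d => d / q^j) with hE
      have hsum := Finset.sum_image (s := Dj) (g := fun d : ℕ => d / q^j)
        (f := fun d' : ℕ => (1:ℝ)/(d':ℝ)) hinj
      have hcongr : ∑ d ∈ Dj, (1:ℝ)/d
          = ∑ d ∈ Dj, ((1:ℝ)/q)^j * ((1:ℝ)/((d / q^j : ℕ):ℝ)) := by
        apply Finset.sum_congr rfl
        intro d hd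
        have heq : d = q^j * (d / q^j) := (Nat.mul_div_cancel' (hdvd d hd)).symm
        have hcast : (d:ℝ) = (q:ℝ)^j * ((d / q^j : ℕ):ℝ) := by
          conv_lhs => rw [heq]
          push_cast
          ring
        rw [hcast, one_div_pow, div_mul_div_comm, one_mul]
      rw [hcongr, ← Finset.mul_sum, ← hsum]
      apply mul_le_mul_of_nonneg_left _ (by positivity)
      apply ih hQ' E
      intro d' hd'
      obtain ⟨d, hd, rfl⟩ := Finset.mem_image.mp hd'
      have hdd : (d / q^j) ∣ d := ⟨q^j, (Nat.div_mul_cancel (hdvd d hd)).symm⟩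
      have hdne : d ≠ 0 := hd0 d hd
      have hd'ne : d / q^j ≠ 0 := hq0 d hd
      have hfacle : (d / q^j).factorization ≤ d.factorization :=
        (Nat.factorization_le_iff_dvd hd'ne hdne).mpr hdd
      refine ⟨hd'ne, ?_, fun r => le_trans (hfacle r) ((hD d (Finset.mem_filter.mp hd).1).2.2 r)⟩
      -- primeFactors ⊆ Q'
      intro r hr
      have hrd : r ∈ d.primeFactors := Nat.primeFactors_mono hdd hdne hr
      have hrQ : r ∈ insert q Q' := (hD d (Finset.mem_filter.mp hd).1).2.1 hrd
      rcases Finset.mem_insert.mp hrQ with h | h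
      · exfalso
        rw [h] at hr
        -- r = q ∈ primeFactors of d/q^j, but its q-exponent is 0
        have hvq : (d / q^j).factorization q = 0 := by
          have hmul := Nat.factorization_mul (pow_ne_zero j hq.ne_zero) hd'ne
          have : d.factorization q = j + (d / q^j).factorization q := by
            conv_lhs => rw [(Nat.mul_div_cancel' (hdvd d hd)).symm]
            rw [hmul]
            simp [hq.factorization_pow, Finsupp.single_eq_same]
          have hj : d.factorization q = j := (Finset.mem_filter.mp hd).2
          omega
        have := Nat.Prime.factorization_pos_of_dvd hq hd'ne (Nat.dvd_of_mem_primeFactors hr)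
        omega
      · exact h
    calc ∑ j ∈ Finset.range (B+1), ∑ d ∈ D.filter (fun d => d.factorization q = j), (1:ℝ)/d
        ≤ ∑ j ∈ Finset.range (B+1), ((1:ℝ)/q)^j * ∏ r ∈ Q', ∑ i ∈ Finset.range (B+1), ((1:ℝ)/r)^i :=
          Finset.sum_le_sum hstep
      _ = (∑ j ∈ Finset.range (B+1), ((1:ℝ)/q)^j) * ∏ r ∈ Q', ∑ i ∈ Finset.range (B+1), ((1:ℝ)/r)^i := by
          rw [← Finset.sum_mul]
      _ = ∏ r ∈ insert q Q', ∑ i ∈ Finset.range (B+1), ((1:ℝ)/r)^i := by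
          rw [Finset.prod_insert hqQ]


noncomputable def Fq (Q : Finset ℕ) : ℝ :=
  ∑ p ∈ Q, ∏ q ∈ Q.filter (fun q => p < q), (q:ℝ)/((q:ℝ)-1)

lemma ratio_nonneg {q : ℕ} (hq : 2 ≤ q) : 0 ≤ (q:ℝ)/((q:ℝ)-1) := by
  have : (1:ℝ) < q := by exact_mod_cast hq
  apply div_nonneg <;> linarith

lemma alpha_le_Fq (n : ℕ) (hn : 1 ≤ n) : alphaFn n ≤ Fq n.primeFactors := by
  classical
  have hn0 : n ≠ 0 := by omega
  set Q := n.primeFactors with hQdef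
  have hQprime : ∀ q ∈ Q, Nat.Prime q := fun q hq => Nat.prime_of_mem_primeFactors hq
  set Fib : ℕ → Finset ℕ := fun p => (n.divisors.filter (fun d => 2 ≤ d)).filter
    (fun d => d.minFac = p) with hFib
  -- step 1
  have h1 : alphaFn n = ∑ d ∈ n.divisors.filter (fun d => 2 ≤ d), ((d.minFac : ℝ) - 1) / d := by
    rw [alphaFn]
    apply (Finset.sum_subset (Finset.filter_subset _ _) _).symm
    intro d hd hnd
    have hd1 : d = 1 := by
      have := Nat.pos_of_mem_divisors hd
      by_contra h
      exact hnd (Finset.mem_filter.mpr ⟨hd, by omega⟩)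
    rw [hd1]
    simp [Nat.minFac_one]
  have hmapsto : ∀ d ∈ n.divisors.filter (fun d => 2 ≤ d), d.minFac ∈ Q := by
    intro d hd
    obtain ⟨hdn, hd2⟩ := Finset.mem_filter.mp hd
    exact Nat.mem_primeFactors.mpr ⟨Nat.minFac_prime (by omega),
      (Nat.minFac_dvd d).trans (Nat.dvd_of_mem_divisors hdn), hn0⟩
  have h2 : alphaFn n = ∑ p ∈ Q, ∑ d ∈ Fib p, ((d.minFac : ℝ) - 1) / d := by
    rw [h1, Finset.sum_fiberwise_of_maps_to hmapsto]
  rw [h2, Fq]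
  apply Finset.sum_le_sum
  intro p hp
  have hpprime : p.Prime := hQprime p hp
  have hp2 : 2 ≤ p := hpprime.two_le
  have hpR : (1:ℝ) < p := by exact_mod_cast hp2
  -- facts about the fiber
  have hfib : ∀ d ∈ Fib p, d ∣ n ∧ 2 ≤ d ∧ d.minFac = p ∧ p ∣ d ∧ d ≠ 0 := by
    intro d hd
    obtain ⟨hd', hmf⟩ := Finset.mem_filter.mp hd
    obtain ⟨hdn, hd2⟩ := Finset.mem_filter.mp hd'
    have hdvd : d ∣ n := Nat.dvd_of_mem_divisors hdn
    exact ⟨hdvd, hd2, hmf, hmf ▸ Nat.minFac_dvd d, by omega⟩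
  -- rewrite the sum
  have h3 : ∑ d ∈ Fib p, ((d.minFac : ℝ) - 1) / d
      = ((p:ℝ) - 1) * ∑ d ∈ Fib p, (1:ℝ)/d := by
    rw [Finset.mul_sum]
    apply Finset.sum_congr rfl
    intro d hd
    rw [(hfib d hd).2.2.1, div_eq_mul_one_div]
  have hinj : ∀ x ∈ Fib p, ∀ y ∈ Fib p, x / p = y / p → x = y := by
    intro x hx y hy hxy
    have hx' := Nat.div_mul_cancel (hfib x hx).2.2.2.1
    have hy' := Nat.div_mul_cancel (hfib y hy).2.2.2.1
    rw [← hx', ← hy', hxy]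
  set E := (Fib p).image (fun d => d / p) with hE
  have hsum := Finset.sum_image (s := Fib p) (g := fun d : ℕ => d / p)
    (f := fun d' : ℕ => (1:ℝ)/p * (1/(d':ℝ))) hinj
  have h4 : ∑ d ∈ Fib p, (1:ℝ)/d = (1/(p:ℝ)) * ∑ d' ∈ E, (1:ℝ)/d' := by
    have hcongr : ∑ d ∈ Fib p, (1:ℝ)/d = ∑ d ∈ Fib p, (1:ℝ)/p * (1/((d / p : ℕ):ℝ)) := by
      apply Finset.sum_congr rfl
      intro d hd
      have heq : d = p * (d / p) := (Nat.mul_div_cancel' (hfib d hd).2.2.2.1).symm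
      have hcast : (d:ℝ) = (p:ℝ) * ((d / p : ℕ):ℝ) := by
        conv_lhs => rw [heq]
        push_cast
        ring
      rw [hcast, div_mul_div_comm, one_mul]
    rw [hcongr, ← hsum, ← Finset.mul_sum]
  have hEhyp : ∀ d' ∈ E, d' ≠ 0 ∧ d'.primeFactors ⊆ Q.filter (fun q => p ≤ q) ∧
      ∀ r, d'.factorization r ≤ n := by
    intro d' hd'
    obtain ⟨d, hd, rfl⟩ := Finset.mem_image.mp hd'
    obtain ⟨hdn, hd2, hmf, hpd, hd0⟩ := hfib d hd
    have hdd : d / p ∣ d := ⟨p, (Nat.div_mul_cancel hpd).symm⟩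
    have hd'n : d / p ∣ n := hdd.trans hdn
    have hd'0 : d / p ≠ 0 := by
      intro h
      have := Nat.div_mul_cancel hpd
      rw [h, zero_mul] at this
      omega
    refine ⟨hd'0, ?_, ?_⟩
    · intro r hr
      have hrp : r.Prime := Nat.prime_of_mem_primeFactors hr
      have hrd : r ∣ d := (Nat.dvd_of_mem_primeFactors hr).trans hdd
      refine Finset.mem_filter.mpr ⟨Nat.mem_primeFactors.mpr ⟨hrp, hrd.trans hdn, hn0⟩, ?_⟩
      rw [← hmf]
      exact Nat.minFac_le_of_dvd hrp.two_le hrd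
    · intro r
      have hle : (d/p).factorization ≤ n.factorization :=
        (Nat.factorization_le_iff_dvd hd'0 hn0).mpr hd'n
      exact le_trans (hle r) (le_of_lt (Nat.factorization_lt r hn0))
  have h5 : ∑ d' ∈ E, (1:ℝ)/d' ≤ ∏ q ∈ Q.filter (fun q => p ≤ q), (q:ℝ)/((q:ℝ)-1) := by
    refine le_trans (prod_bound n (Q.filter (fun q => p ≤ q))
      (fun q hq => hQprime q (Finset.mem_filter.mp hq).1) E hEhyp) ?_
    apply Finset.prod_le_prod
    · intro q hq
      apply Finset.sum_nonneg
      intro j _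
      positivity
    · intro q hq
      exact geom_le (hQprime q (Finset.mem_filter.mp hq).1).two_le n
  have h6 : Q.filter (fun q => p ≤ q) = insert p (Q.filter (fun q => p < q)) := by
    ext q
    simp only [Finset.mem_filter, Finset.mem_insert]
    constructor
    · rintro ⟨hq, hle⟩
      rcases eq_or_lt_of_le hle with h | h
      · exact Or.inl h.symm
      · exact Or.inr ⟨hq, h⟩
    · rintro (rfl | ⟨hq, hlt⟩)
      · exact ⟨hp, le_refl _⟩
      · exact ⟨hq, le_of_lt hlt⟩
  have hpnotmem : p ∉ Q.filter (fun q => p < q) := by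
    simp
  have h7 : ∏ q ∈ Q.filter (fun q => p ≤ q), (q:ℝ)/((q:ℝ)-1)
      = (p:ℝ)/((p:ℝ)-1) * ∏ q ∈ Q.filter (fun q => p < q), (q:ℝ)/((q:ℝ)-1) := by
    rw [h6, Finset.prod_insert hpnotmem]
  have hprodnn : (0:ℝ) ≤ ∏ q ∈ Q.filter (fun q => p < q), (q:ℝ)/((q:ℝ)-1) :=
    Finset.prod_nonneg (fun q hq => ratio_nonneg (hQprime q (Finset.mem_filter.mp hq).1).two_le)
  rw [h3, h4]
  calc ((p:ℝ) - 1) * ((1/(p:ℝ)) * ∑ d' ∈ E, (1:ℝ)/d')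
      ≤ ((p:ℝ) - 1) * ((1/(p:ℝ)) * ((p:ℝ)/((p:ℝ)-1) * ∏ q ∈ Q.filter (fun q => p < q), (q:ℝ)/((q:ℝ)-1))) := by
        apply mul_le_mul_of_nonneg_left _ (by linarith)
        apply mul_le_mul_of_nonneg_left _ (by positivity)
        rw [← h7]
        exact h5
    _ = ∏ q ∈ Q.filter (fun q => p < q), (q:ℝ)/((q:ℝ)-1) := by
        rw [show ((p:ℝ)-1) * ((1/(p:ℝ)) * ((p:ℝ)/((p:ℝ)-1) * ∏ q ∈ Q.filter (fun q => p < q), (q:ℝ)/((q:ℝ)-1)))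
          = (((p:ℝ)-1)/((p:ℝ)-1)) * ((p:ℝ)/(p:ℝ)) * ∏ q ∈ Q.filter (fun q => p < q), (q:ℝ)/((q:ℝ)-1) from by ring,
          div_self (by linarith : ((p:ℝ)-1) ≠ 0), div_self (by linarith : (p:ℝ) ≠ 0), one_mul, one_mul]


noncomputable def fval (k : ℕ) : ℝ :=
  if k = 0 then 0 else if k = 1 then 1 else if k = 2 then 5/2 else if k = 3 then 33/8
  else if k = 4 then 93/16 else if k = 5 then 1183/160 else if k = 6 then 17299/1920
  else if k = 7 then 324803/30720 else if k = 8 then 6724217/552960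
  else if k = 9 then 166822111/12165120 else (166822111/109486080) * k

lemma fval_large {k : ℕ} (h : 10 ≤ k) : fval k = (166822111/109486080 : ℝ) * k := by
  rw [fval]
  repeat rw [if_neg (by omega)]

lemma fval_le (k : ℕ) : fval k ≤ (166822111/109486080 : ℝ) * k := by
  by_cases h : 10 ≤ k
  · rw [fval_large h]
  · interval_cases k <;> norm_num [fval]

lemma fval_nonneg (k : ℕ) : 0 ≤ fval k := by
  by_cases h : 10 ≤ k
  · rw [fval_large h]; positivity
  · interval_cases k <;> norm_num [fval]

lemma Fq_rec {Q : Finset ℕ} (hne : Q.Nonempty) :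
    Fq Q = 1 + ((Q.max' hne : ℝ)/((Q.max' hne : ℝ)-1)) * Fq (Q.erase (Q.max' hne)) := by
  classical
  set P := Q.max' hne with hPdef
  have hPmem : P ∈ Q := Q.max'_mem hne
  have hgP : ∀ q ∈ Q, q ≤ P := fun q hq => Q.le_max' q hq
  have htP : (Q.filter (fun q => P < q)) = ∅ :=
    Finset.filter_false_of_mem (fun q hq => by have := hgP q hq; omega)
  have hothers : ∀ p ∈ Q.erase P,
      Q.filter (fun q => p < q) = insert P ((Q.erase P).filter (fun q => p < q)) := by
    intro p hp
    obtain ⟨hpne, hpQ⟩ := Finset.mem_erase.mp hp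
    have hplt : p < P := lt_of_le_of_ne (hgP p hpQ) hpne
    ext q
    simp only [Finset.mem_filter, Finset.mem_insert, Finset.mem_erase]
    constructor
    · rintro ⟨hq, hlt⟩
      by_cases h : q = P
      · left; exact h
      · right; exact ⟨⟨h, hq⟩, hlt⟩
    · rintro (rfl | ⟨⟨hne', hq⟩, hlt⟩)
      · exact ⟨hPmem, hplt⟩
      · exact ⟨hq, hlt⟩
  have hnotmem : ∀ p : ℕ, P ∉ (Q.erase P).filter (fun q => p < q) := by
    intro p hmem
    exact absurd (Finset.mem_of_mem_filter P hmem) (Finset.notMem_erase P Q)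
  have hsum2 : ∑ p ∈ Q.erase P, ∏ q ∈ Q.filter (fun q => p < q), (q:ℝ)/((q:ℝ)-1)
      = ((P:ℝ)/((P:ℝ)-1)) * Fq (Q.erase P) := by
    rw [Fq, Finset.mul_sum]
    apply Finset.sum_congr rfl
    intro p hp
    rw [hothers p hp, Finset.prod_insert (hnotmem p)]
  rw [Fq, ← Finset.sum_erase_add Q _ hPmem, hsum2, htP]
  simp [add_comm]

lemma prime_count_le (N : ℕ) :
    ((Finset.range N).filter Nat.Prime).card ≤ 8 * (N / 30 + 1) + 3 := by
  classical
  set Big := (Finset.range N).filter (fun q => Nat.Coprime q 30) with hBig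
  have hsub : (Finset.range N).filter Nat.Prime ⊆ Big ∪ ({2,3,5} : Finset ℕ) := by
    intro q hq
    obtain ⟨hqr, hqp⟩ := Finset.mem_filter.mp hq
    by_cases h : q = 2 ∨ q = 3 ∨ q = 5
    · exact Finset.mem_union_right _ (by rcases h with h|h|h <;> simp [h])
    · push_neg at h
      apply Finset.mem_union_left
      refine Finset.mem_filter.mpr ⟨hqr, ?_⟩
      have c2 : Nat.Coprime q 2 := (Nat.Prime.coprime_iff_not_dvd hqp).mpr
        (fun hd => h.1 ((Nat.prime_dvd_prime_iff_eq hqp Nat.prime_two).mp hd))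
      have c3 : Nat.Coprime q 3 := (Nat.Prime.coprime_iff_not_dvd hqp).mpr
        (fun hd => h.2.1 ((Nat.prime_dvd_prime_iff_eq hqp Nat.prime_three).mp hd))
      have c5 : Nat.Coprime q 5 := (Nat.Prime.coprime_iff_not_dvd hqp).mpr
        (fun hd => h.2.2 ((Nat.prime_dvd_prime_iff_eq hqp (by norm_num)).mp hd))
      have h30 : (30:ℕ) = 2*(3*5) := by norm_num
      rw [Nat.Coprime, h30]
      exact c2.mul_right (c3.mul_right c5)
  have hcard1 : ((Finset.range N).filter Nat.Prime).card ≤ Big.card + 3 := by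
    refine le_trans (Finset.card_le_card hsub) (le_trans (Finset.card_union_le _ _) ?_)
    have : ({2,3,5} : Finset ℕ).card ≤ 3 := by decide
    omega
  have hfiber : ∀ b ∈ Big.image (fun q => q / 30),
      (Big.filter (fun q => q / 30 = b)).card ≤ 8 := by
    intro b _
    have hsub2 : Big.filter (fun q => q / 30 = b) ⊆
        ((Finset.range 30).filter (fun r => Nat.Coprime r 30)).image (fun r => 30*b + r) := by
      intro q hq
      obtain ⟨hqBig, hqb⟩ := Finset.mem_filter.mp hq
      obtain ⟨_, hqcop⟩ := Finset.mem_filter.mp hqBig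
      apply Finset.mem_image.mpr
      refine ⟨q % 30, Finset.mem_filter.mpr ⟨Finset.mem_range.mpr (Nat.mod_lt q (by norm_num)), ?_⟩, ?_⟩
      · have hdm : 30 * (q / 30) + q % 30 = q := Nat.div_add_mod q 30
        have := (Nat.coprime_mul_left_add_left (q % 30) 30 (q / 30)).mp (by rwa [hdm])
        exact this
      · rw [← hqb]
        exact (Nat.div_add_mod q 30).symm ▸ rfl
    refine le_trans (Finset.card_le_card hsub2) (le_trans Finset.card_image_le ?_)
    decide
  have hbig : Big.card ≤ 8 * (N/30 + 1) := by
    have h1 := Finset.card_le_mul_card_image Big 8 hfiber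
    have h2 : (Big.image (fun q => q / 30)).card ≤ N/30 + 1 := by
      have : Big.image (fun q => q / 30) ⊆ Finset.range (N/30 + 1) := by
        intro b hb
        obtain ⟨q, hq, rfl⟩ := Finset.mem_image.mp hb
        have hqN : q < N := Finset.mem_range.mp (Finset.mem_filter.mp hq).1
        exact Finset.mem_range.mpr (by
          have : q / 30 ≤ N / 30 := Nat.div_le_div_right (le_of_lt hqN)
          omega)
      calc (Big.image (fun q => q / 30)).card ≤ (Finset.range (N/30+1)).card :=
            Finset.card_le_card this
        _ = N/30 + 1 := Finset.card_range _
    calc Big.card ≤ 8 * (Big.image (fun q => q / 30)).card := h1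
      _ ≤ 8 * (N/30 + 1) := by omega
  omega

set_option maxHeartbeats 2000000 in
set_option maxRecDepth 100000 in
lemma Fq_le : ∀ (k : ℕ) (Q : Finset ℕ), (∀ q ∈ Q, Nat.Prime q) → Q.card = k → Fq Q ≤ fval k := by
  intro k
  induction k using Nat.strong_induction_on with
  | _ k ih =>
  intro Q hQ hcard
  rcases Nat.eq_zero_or_pos k with hk0 | hk1
  · subst hk0
    have : Q = ∅ := Finset.card_eq_zero.mp hcard
    rw [this]
    simp [Fq, fval]
  have hne : Q.Nonempty := Finset.card_pos.mp (by omega)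
  set P := Q.max' hne with hPdef
  have hPmem : P ∈ Q := Q.max'_mem hne
  have hPprime : P.Prime := hQ P hPmem
  have hP2 : 2 ≤ P := hPprime.two_le
  have hP1 : (1:ℝ) < P := by exact_mod_cast hP2
  have herase : (Q.erase P).card = k - 1 := by rw [Finset.card_erase_of_mem hPmem, hcard]
  have hIH : Fq (Q.erase P) ≤ fval (k-1) :=
    ih (k-1) (by omega) _ (fun q hq => hQ q (Finset.mem_erase.mp hq).2) herase
  have hrec := Fq_rec hne
  have hPge : ∀ t : ℕ, ((Finset.range t).filter Nat.Prime).card < Q.card → t ≤ P := by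
    intro t ht
    by_contra h
    push_neg at h
    have hsub : Q ⊆ (Finset.range t).filter Nat.Prime := by
      intro q hq
      exact Finset.mem_filter.mpr ⟨Finset.mem_range.mpr (lt_of_le_of_lt (Q.le_max' q hq) h), hQ q hq⟩
    exact absurd (Finset.card_le_card hsub) (by omega)
  have hratio : ∀ t : ℕ, 2 ≤ t → t ≤ P → (P:ℝ)/((P:ℝ)-1) ≤ (t:ℝ)/((t:ℝ)-1) := by
    intro t ht2 htP
    have ht1 : (1:ℝ) < t := by exact_mod_cast ht2
    have htPR : (t:ℝ) ≤ P := by exact_mod_cast htP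
    rw [div_le_div_iff₀ (by linarith) (by linarith)]
    nlinarith
  have hblock : ∀ t : ℕ, 2 ≤ t → t ≤ P → Fq Q ≤ 1 + (t:ℝ)/((t:ℝ)-1) * fval (k-1) := by
    intro t ht2 htP
    rw [hrec]
    have h1 : (P:ℝ)/((P:ℝ)-1) * Fq (Q.erase P) ≤ (P:ℝ)/((P:ℝ)-1) * fval (k-1) :=
      mul_le_mul_of_nonneg_left hIH (by apply div_nonneg <;> linarith)
    have h2 : (P:ℝ)/((P:ℝ)-1) * fval (k-1) ≤ (t:ℝ)/((t:ℝ)-1) * fval (k-1) :=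
      mul_le_mul_of_nonneg_right (hratio t ht2 htP) (fval_nonneg _)
    rw [← hPdef]
    linarith
  by_cases hk47 : k ≤ 47
  · interval_cases k
    · exact le_trans (hblock 2 (by norm_num) (hPge 2 (by rw [hcard]; decide))) (by norm_num [fval])
    · exact le_trans (hblock 3 (by norm_num) (hPge 3 (by rw [hcard]; decide))) (by norm_num [fval])
    · exact le_trans (hblock 5 (by norm_num) (hPge 5 (by rw [hcard]; decide))) (by norm_num [fval])
    · exact le_trans (hblock 7 (by norm_num) (hPge 7 (by rw [hcard]; decide))) (by norm_num [fval])
    · exact le_trans (hblock 11 (by norm_num) (hPge 11 (by rw [hcard]; decide))) (by norm_num [fval])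
    · exact le_trans (hblock 13 (by norm_num) (hPge 13 (by rw [hcard]; decide))) (by norm_num [fval])
    · exact le_trans (hblock 17 (by norm_num) (hPge 17 (by rw [hcard]; decide))) (by norm_num [fval])
    · exact le_trans (hblock 19 (by norm_num) (hPge 19 (by rw [hcard]; decide))) (by norm_num [fval])
    · exact le_trans (hblock 23 (by norm_num) (hPge 23 (by rw [hcard]; decide))) (by norm_num [fval])
    · exact le_trans (hblock 29 (by norm_num) (hPge 29 (by rw [hcard]; decide))) (by norm_num [fval])
    · exact le_trans (hblock 31 (by norm_num) (hPge 31 (by rw [hcard]; decide))) (by norm_num [fval])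
    · exact le_trans (hblock 37 (by norm_num) (hPge 37 (by rw [hcard]; decide))) (by norm_num [fval])
    · exact le_trans (hblock 41 (by norm_num) (hPge 41 (by rw [hcard]; decide))) (by norm_num [fval])
    · exact le_trans (hblock 43 (by norm_num) (hPge 43 (by rw [hcard]; decide))) (by norm_num [fval])
    · exact le_trans (hblock 47 (by norm_num) (hPge 47 (by rw [hcard]; decide))) (by norm_num [fval])
    · exact le_trans (hblock 53 (by norm_num) (hPge 53 (by rw [hcard]; decide))) (by norm_num [fval])
    · exact le_trans (hblock 59 (by norm_num) (hPge 59 (by rw [hcard]; decide))) (by norm_num [fval])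
    · exact le_trans (hblock 61 (by norm_num) (hPge 61 (by rw [hcard]; decide))) (by norm_num [fval])
    · exact le_trans (hblock 67 (by norm_num) (hPge 67 (by rw [hcard]; decide))) (by norm_num [fval])
    · exact le_trans (hblock 71 (by norm_num) (hPge 71 (by rw [hcard]; decide))) (by norm_num [fval])
    · exact le_trans (hblock 73 (by norm_num) (hPge 73 (by rw [hcard]; decide))) (by norm_num [fval])
    · exact le_trans (hblock 79 (by norm_num) (hPge 79 (by rw [hcard]; decide))) (by norm_num [fval])
    · exact le_trans (hblock 83 (by norm_num) (hPge 83 (by rw [hcard]; decide))) (by norm_num [fval])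
    · exact le_trans (hblock 89 (by norm_num) (hPge 89 (by rw [hcard]; decide))) (by norm_num [fval])
    · exact le_trans (hblock 97 (by norm_num) (hPge 97 (by rw [hcard]; decide))) (by norm_num [fval])
    · exact le_trans (hblock 101 (by norm_num) (hPge 101 (by rw [hcard]; decide))) (by norm_num [fval])
    · exact le_trans (hblock 103 (by norm_num) (hPge 103 (by rw [hcard]; decide))) (by norm_num [fval])
    · exact le_trans (hblock 107 (by norm_num) (hPge 107 (by rw [hcard]; decide))) (by norm_num [fval])
    · exact le_trans (hblock 109 (by norm_num) (hPge 109 (by rw [hcard]; decide))) (by norm_num [fval])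
    · exact le_trans (hblock 113 (by norm_num) (hPge 113 (by rw [hcard]; decide))) (by norm_num [fval])
    · exact le_trans (hblock 127 (by norm_num) (hPge 127 (by rw [hcard]; decide))) (by norm_num [fval])
    · exact le_trans (hblock 131 (by norm_num) (hPge 131 (by rw [hcard]; decide))) (by norm_num [fval])
    · exact le_trans (hblock 137 (by norm_num) (hPge 137 (by rw [hcard]; decide))) (by norm_num [fval])
    · exact le_trans (hblock 139 (by norm_num) (hPge 139 (by rw [hcard]; decide))) (by norm_num [fval])
    · exact le_trans (hblock 149 (by norm_num) (hPge 149 (by rw [hcard]; decide))) (by norm_num [fval])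
    · exact le_trans (hblock 151 (by norm_num) (hPge 151 (by rw [hcard]; decide))) (by norm_num [fval])
    · exact le_trans (hblock 157 (by norm_num) (hPge 157 (by rw [hcard]; decide))) (by norm_num [fval])
    · exact le_trans (hblock 163 (by norm_num) (hPge 163 (by rw [hcard]; decide))) (by norm_num [fval])
    · exact le_trans (hblock 167 (by norm_num) (hPge 167 (by rw [hcard]; decide))) (by norm_num [fval])
    · exact le_trans (hblock 173 (by norm_num) (hPge 173 (by rw [hcard]; decide))) (by norm_num [fval])
    · exact le_trans (hblock 179 (by norm_num) (hPge 179 (by rw [hcard]; decide))) (by norm_num [fval])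
    · exact le_trans (hblock 181 (by norm_num) (hPge 181 (by rw [hcard]; decide))) (by norm_num [fval])
    · exact le_trans (hblock 191 (by norm_num) (hPge 191 (by rw [hcard]; decide))) (by norm_num [fval])
    · exact le_trans (hblock 193 (by norm_num) (hPge 193 (by rw [hcard]; decide))) (by norm_num [fval])
    · exact le_trans (hblock 197 (by norm_num) (hPge 197 (by rw [hcard]; decide))) (by norm_num [fval])
    · exact le_trans (hblock 199 (by norm_num) (hPge 199 (by rw [hcard]; decide))) (by norm_num [fval])
    · exact le_trans (hblock 211 (by norm_num) (hPge 211 (by rw [hcard]; decide))) (by norm_num [fval])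
  · -- k ≥ 48
    push_neg at hk47
    have h48 : 48 ≤ k := hk47
    have hsubP : Q ⊆ (Finset.range (P+1)).filter Nat.Prime := by
      intro q hq
      exact Finset.mem_filter.mpr ⟨Finset.mem_range.mpr (Nat.lt_succ_of_le (Q.le_max' q hq)), hQ q hq⟩
    have hcount : k ≤ 8 * ((P+1) / 30 + 1) + 3 := by
      calc k = Q.card := hcard.symm
        _ ≤ ((Finset.range (P+1)).filter Nat.Prime).card := Finset.card_le_card hsubP
        _ ≤ 8 * ((P+1) / 30 + 1) + 3 := prime_count_le (P+1)
    have h30 : 30 * k ≤ 8 * P + 338 := by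
      have hdm : 30 * ((P+1)/30) ≤ P + 1 := Nat.mul_div_le (P+1) 30 |>.trans (le_refl _) |>.trans (le_refl _)
      omega
    have h30R : 30 * (k:ℝ) ≤ 8 * (P:ℝ) + 338 := by exact_mod_cast h30
    have hkR : (48:ℝ) ≤ k := by exact_mod_cast h48
    have hfv : fval (k-1) = (166822111/109486080 : ℝ) * ((k:ℝ) - 1) := by
      rw [fval_large (by omega)]
      congr 1
      have : (1:ℕ) ≤ k := by omega
      push_cast [Nat.cast_sub this]
      ring
    have hrationn : (0:ℝ) ≤ (P:ℝ)/((P:ℝ)-1) := by apply div_nonneg <;> linarith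
    have hmain : Fq Q ≤ 1 + (P:ℝ)/((P:ℝ)-1) * ((166822111/109486080 : ℝ) * ((k:ℝ)-1)) := by
      rw [hrec, ← hPdef]
      have h1 := mul_le_mul_of_nonneg_left (le_trans hIH (le_of_eq hfv)) hrationn
      linarith
    refine le_trans hmain ?_
    rw [fval_large (by omega)]
    have hd : (0:ℝ) < (P:ℝ) - 1 := by linarith
    rw [div_mul_eq_mul_div, ← le_sub_iff_add_le', div_le_iff₀ hd]
    nlinarith [h30R, hkR, hP1]


end Aux

theorem stmt7 (n : ℕ) (hn : 1 ≤ n) :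
    littleCrossNumber (ZMod n) ≤ alphaFn n ∧
    alphaFn n ≤ (166822111 / 109486080 : ℝ) * (n.primeFactors.card : ℝ) := by
  constructor
  · apply Real.sSup_le _ (Aux.alpha_nonneg n)
    rintro x ⟨S, hSz, rfl⟩
    exact Aux.key n hn S hSz
  · calc alphaFn n ≤ Aux.Fq n.primeFactors := Aux.alpha_le_Fq n hn
      _ ≤ Aux.fval n.primeFactors.card :=
        Aux.Fq_le _ _ (fun q hq => Nat.prime_of_mem_primeFactors hq) rfl
      _ ≤ _ := Aux.fval_le _
end
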